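/- arXiv:math/0212183 — 9 statements merged into one kernel-verified Lean document; each statement's English description precedes it below -/
import Mathlib

section
/- Let G and A be groups, with G acting on A by group automorphisms (written g·a), and let A⋊G be the corresponding semidirect product. Let X be a set with an action of A⋊G (for a∈A, g∈G, x∈X write a·x and g·x for the actions via the canonical inclusions A → A⋊G and G → A⋊G). Let π: G → A be a bijection satisfying π(gh) = π(g)·(g·π(h)) for all g,h ∈ G, and let Ψ: X → A be a map satisfying Ψ((a,g)·x) = a·(g·Ψ(x))·a⁻¹ for all a ∈ A, g ∈ G, x ∈ X, whose image generates A. For x,y ∈ X define x∗̌y := π⁻¹(Ψ(y)⁻¹)·x and x∘̌y := (π⁻¹(Ψ(x∗̌y)⁻¹))⁻¹·(Ψ(x∗̌y)·y). Then the map R: X×X → X×X, R(x,y) = (x∗̌y, x∘̌y), satisfies R¹²∘R¹³∘R²³ = R²³∘R¹³∘R¹² as maps X×X×X → X×X×X, where Rⁱʲ denotes R applied to the i-th and j-th coordinates. -/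
/-- **Soloviev's lemma** (Lemma 2.2 in Etingof–Graña): a bijective cocycle 7-tuple
yields a set-theoretical solution of the braid/quantum Yang–Baxter equation
`R¹² ∘ R¹³ ∘ R²³ = R²³ ∘ R¹³ ∘ R¹²`. -/
theorem soloviev_bcst_yields_qybe
    {A G X : Type*} [Group A] [Group G] (φ : G →* MulAut A)
    [MulAction (A ⋊[φ] G) X]
    (π : G → A) (πinv : A → G)
    (hπl : Function.LeftInverse πinv π) (hπr : Function.RightInverse πinv π)
    (hcoc : ∀ g h : G, π (g * h) = π g * φ g (π h))
    (Ψ : X → A)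
    (hΨ : ∀ (a : A) (g : G) (x : X),
      Ψ ((⟨a, g⟩ : A ⋊[φ] G) • x) = a * φ g (Ψ x) * a⁻¹)
    (hgen : Subgroup.closure (Set.range Ψ) = ⊤)
    (star circ : X → X → X)
    (hstar : ∀ x y : X,
      star x y = (SemidirectProduct.inr (πinv ((Ψ y)⁻¹)) : A ⋊[φ] G) • x)
    (hcirc : ∀ x y : X,
      circ x y = (SemidirectProduct.inr ((πinv ((Ψ (star x y))⁻¹))⁻¹) : A ⋊[φ] G) •
        ((SemidirectProduct.inl (Ψ (star x y)) : A ⋊[φ] G) • y))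
    (R : X × X → X × X) (hR : ∀ x y : X, R (x, y) = (star x y, circ x y))
    (R12 R13 R23 : X × X × X → X × X × X)
    (hR12 : ∀ p : X × X × X,
      R12 p = ((R (p.1, p.2.1)).1, (R (p.1, p.2.1)).2, p.2.2))
    (hR13 : ∀ p : X × X × X,
      R13 p = ((R (p.1, p.2.2)).1, p.2.1, (R (p.1, p.2.2)).2))
    (hR23 : ∀ p : X × X × X,
      R23 p = (p.1, R (p.2.1, p.2.2))) :
    R12 ∘ R13 ∘ R23 = R23 ∘ R13 ∘ R12 := by
  classical
  -- basic consequences of the cocycle identity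
  have πinj : Function.Injective π := hπl.injective
  have hπ1 : π 1 = 1 := by
    have h := hcoc 1 1
    simp only [mul_one, map_one, MulAut.one_apply] at h
    exact (left_eq_mul.mp h)
  have hφπ : ∀ g h : G, φ g (π h) = (π g)⁻¹ * π (g * h) := by
    intro g h; rw [hcoc]; group
  have hπinv : ∀ g : G, π g⁻¹ = (φ g⁻¹ (π g))⁻¹ := by
    intro g
    have h := hφπ g⁻¹ g
    rw [inv_mul_cancel, hπ1, mul_one] at h
    rw [h, inv_inv]
  -- notation
  set gg : X → G := fun y => πinv ((Ψ y)⁻¹) with hggdef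
  set θ : G → A ⋊[φ] G := fun k => ⟨π k, k⟩ with hθdef
  have hggπ : ∀ y : X, π (gg y) = (Ψ y)⁻¹ := fun y => hπr _
  have hθmul : ∀ k l : G, θ (k * l) = θ k * θ l := by
    intro k l
    rw [hθdef]
    show (⟨π (k * l), k * l⟩ : A ⋊[φ] G) = ⟨π k, k⟩ * ⟨π l, l⟩
    rw [SemidirectProduct.mul_def]
    exact congrArg (fun a => (⟨a, k * l⟩ : A ⋊[φ] G)) (hcoc k l)
  have hΨinr : ∀ (g : G) (x : X),
      Ψ ((SemidirectProduct.inr g : A ⋊[φ] G) • x) = φ g (Ψ x) := by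
    intro g x
    have h := hΨ 1 g x
    simpa using h
  have hΨθ : ∀ (k : G) (y : X), Ψ (θ k • y) = π k * φ k (Ψ y) * (π k)⁻¹ :=
    fun k y => hΨ (π k) k y
  -- rewrite star and circ
  have hstar' : ∀ x y : X, star x y = (SemidirectProduct.inr (gg y) : A ⋊[φ] G) • x :=
    fun x y => hstar x y
  have hcirc' : ∀ x y : X, circ x y = θ (gg (star x y))⁻¹ • y := by
    intro x y
    rw [hcirc, ← mul_smul]
    congr 1
    show SemidirectProduct.inr ((gg (star x y))⁻¹) *
        SemidirectProduct.inl (Ψ (star x y)) = θ (gg (star x y))⁻¹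
    set m := gg (star x y) with hm
    have h2 : Ψ (star x y) = (π m)⁻¹ := by rw [hm, hggπ, inv_inv]
    ext
    · show (1 : A) * φ m⁻¹ (Ψ (star x y)) = π m⁻¹
      rw [one_mul, h2, map_inv, ← hπinv]
    · show m⁻¹ * 1 = m⁻¹
      rw [mul_one]
  -- key lemma L2
  have L2 : ∀ a b : X, π (gg (star a b)) = (π (gg b))⁻¹ * π (gg b * gg a) := by
    intro a b
    rw [hggπ, hstar', hΨinr, ← map_inv, ← hggπ, hφπ]
  -- key lemma Lθ
  have Lθ : ∀ (k : G) (y : X), π (gg (θ k • y)) = π (k * gg y) * (π k)⁻¹ := by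
    intro k y
    rw [hggπ, hΨθ]
    rw [mul_inv_rev, mul_inv_rev, inv_inv, ← map_inv, ← hggπ, hφπ k (gg y)]
    group
  -- key lemma L1
  have L1 : ∀ x y : X, gg (star x y) * gg (circ x y) = gg y * gg x := by
    intro x y
    apply πinj
    set h := gg (star x y) with hh
    rw [hcoc h (gg (circ x y)), hcirc' x y, Lθ h⁻¹ y]
    have e1 : φ h (π (h⁻¹ * gg y)) = (π h)⁻¹ * π (gg y) := by
      rw [hφπ h (h⁻¹ * gg y), mul_inv_cancel_left]
    have e2 : φ h (π h⁻¹) = (π h)⁻¹ := by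
      rw [hφπ h h⁻¹, mul_inv_cancel, hπ1, mul_one]
    have e3 : π h = (π (gg y))⁻¹ * π (gg y * gg x) := L2 x y
    rw [map_mul, map_inv, e1, e2, e3]
    group
  -- the three coordinate identities
  have G1 : ∀ x y z : X, star (star x (circ y z)) (star y z) = star (star x y) z := by
    intro x y z
    rw [hstar' (star x (circ y z)) (star y z), hstar' x (circ y z), ← mul_smul, ← map_mul,
      L1 y z, map_mul, mul_smul, ← hstar' x y, ← hstar' (star x y) z]
  have G2 : ∀ x y z : X,
      circ (star x (circ y z)) (star y z) = star (circ x y) (circ (star x y) z) := by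
    intro x y z
    rw [hcirc' (star x (circ y z)) (star y z), G1 x y z]
    set k := gg (star (star x y) z) with hk
    set m := gg (star x y) with hm
    set t := gg (circ (star x y) z) with ht
    rw [hstar' y z, hstar' (circ x y) (circ (star x y) z), hcirc' x y, ← hm, ← ht,
      ← mul_smul, ← mul_smul]
    congr 1
    have hkt : k * t = gg z * m := L1 (star x y) z
    have htm : t = k⁻¹ * (gg z * m) := by rw [← hkt]; group
    have hπk : π k = φ (gg z) (π m) := by
      rw [hk, hm, hggπ, hstar' (star x y) z, hΨinr, ← map_inv, ← hggπ]
    ext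
    · show π k⁻¹ * φ k⁻¹ (1 : A) = (1 : A) * φ t (π m⁻¹)
      rw [map_one, mul_one, one_mul]
      have e5 : φ t (π m⁻¹) = (φ (t * m⁻¹) (π m))⁻¹ := by
        rw [hπinv m, map_inv, map_mul, MulAut.mul_apply]
      have e6 : t * m⁻¹ = k⁻¹ * gg z := by rw [htm]; group
      have e7 : φ (k⁻¹ * gg z) (π m) = φ k⁻¹ (π k) := by
        rw [map_mul, MulAut.mul_apply, hπk]
      rw [e5, e6, e7, ← hπinv k]
    · show k⁻¹ * gg z = t * m⁻¹
      rw [htm]; group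
  have G3 : ∀ x y z : X,
      circ x (circ y z) = circ (circ x y) (circ (star x y) z) := by
    intro x y z
    set s := gg (star y z) with hs
    set n := gg (star x (circ y z)) with hn
    set k := gg (star (star x y) z) with hk
    set r := gg (star (circ x y) (circ (star x y) z)) with hr
    have key : s * n = k * r := by
      apply πinj
      -- compute π (s * n)
      have h1 : π (s * n) = π s * (π (s * gg (circ y z)))⁻¹ *
          π (s * gg (circ y z) * gg x) := by
        rw [hcoc s n, hn, L2 x (circ y z), map_mul, map_inv,
          hφπ s (gg (circ y z)), hφπ s (gg (circ y z) * gg x), ← mul_assoc]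
        group
      have h2 : π (k * r) = π k * (π (k * gg (circ (star x y) z)))⁻¹ *
          π (k * gg (circ (star x y) z) * gg (circ x y)) := by
        rw [hcoc k r, hr, L2 (circ x y) (circ (star x y) z), map_mul, map_inv,
          hφπ k (gg (circ (star x y) z)),
          hφπ k (gg (circ (star x y) z) * gg (circ x y)), ← mul_assoc]
        group
      have e1 : s * gg (circ y z) = gg z * gg y := L1 y z
      have e2 : k * gg (circ (star x y) z) = gg z * gg (star x y) := L1 (star x y) z
      have e3 : gg (star x y) * gg (circ x y) = gg y * gg x := L1 x y
      have hπs : π s = (π (gg z))⁻¹ * π (gg z * gg y) := L2 y z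
      have hπk : π k = (π (gg z))⁻¹ * π (gg z * gg (star x y)) := L2 (star x y) z
      rw [h1, h2, e1, e2, hπs, hπk,
        show gg z * gg (star x y) * gg (circ x y) = gg z * (gg y * gg x) by
          rw [mul_assoc, e3],
        show gg z * gg y * gg x = gg z * (gg y * gg x) by rw [mul_assoc]]
      group
    rw [hcirc' x (circ y z), ← hn, hcirc' y z, ← hs,
      hcirc' (circ x y) (circ (star x y) z), ← hr, hcirc' (star x y) z, ← hk,
      ← mul_smul, ← mul_smul, ← hθmul, ← hθmul,
      show n⁻¹ * s⁻¹ = (s * n)⁻¹ by group, show r⁻¹ * k⁻¹ = (k * r)⁻¹ by group, key]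
  -- assemble
  funext p
  obtain ⟨x, y, z⟩ := p
  simp only [Function.comp_apply, hR23, hR13, hR12, hR]
  simp only [hR, Prod.mk.injEq]
  exact ⟨G1 x y z, G2 x y z, G3 x y z⟩
end

section
/- Given a geometric classical r-matrix datum on A, the ℂ-span of {a¹_1,…,a¹_m} is a Lie subalgebra of Der(A): for all i,k one has [a¹ᵢ,a¹ₖ] ∈ span_ℂ{a¹_1,…,a¹_m}. -/
open TensorProduct

set_option synthInstance.maxHeartbeats 1000000
set_option maxHeartbeats 1000000

lemma exists_dual_fam {K M ι : Type*} [Field K] [AddCommGroup M] [Module K M]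
    [DecidableEq ι] {v : ι → M} (hv : LinearIndependent K v) (i : ι) :
    ∃ f : M →ₗ[K] K, ∀ j, f (v j) = if j = i then 1 else 0 := by
  classical
  have hs : LinearIndepOn K id (Set.range v) := (linearIndepOn_id_range_iff hv.injective).mpr hv
  let b := Module.Basis.extend hs
  have hmem : ∀ j, v j ∈ hs.extend (Set.subset_univ _) := fun j =>
    hs.subset_extend _ ⟨j, rfl⟩
  refine ⟨b.coord ⟨v i, hmem i⟩, fun j => ?_⟩
  have hb : b ⟨v j, hmem j⟩ = v j := Module.Basis.extend_apply_self hs _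
  rw [← hb, Module.Basis.coord_apply, Module.Basis.repr_self, Finsupp.single_apply]
  by_cases h : j = i
  · simp [h]
  · have hne : v j ≠ v i := fun hc => h (hv.injective hc)
    simp [h, Subtype.ext_iff, hne]

/-- A *geometric classical r-matrix datum* on a commutative ℂ-algebra `A`:
finite families `a¹ᵢ, b¹ⱼ` of derivations and `a⁰ᵢ, b⁰ⱼ` of elements of `A`,
each linearly independent over ℂ, satisfying the three components (E1)–(E3)
of the classical Yang–Baxter equation. -/
structure GeomRMatrixDatum (A : Type*) [CommRing A] [Algebra ℂ A] where
  m : ℕ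
  n : ℕ
  a1 : Fin m → Derivation ℂ A A
  a0 : Fin m → A
  b1 : Fin n → Derivation ℂ A A
  b0 : Fin n → A
  indep_a1 : LinearIndependent ℂ a1
  indep_a0 : LinearIndependent ℂ a0
  indep_b1 : LinearIndependent ℂ b1
  indep_b0 : LinearIndependent ℂ b0
  E1 : ∑ i, ∑ k, (⁅a1 i, a1 k⁆ ⊗ₜ[ℂ] (a0 i ⊗ₜ[ℂ] a0 k))
      = ∑ i, ∑ k, (a1 i ⊗ₜ[ℂ] ((a1 k) (a0 i) ⊗ₜ[ℂ] a0 k))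
      + ∑ i, ∑ l, (a1 i ⊗ₜ[ℂ] (b0 l ⊗ₜ[ℂ] (b1 l) (a0 i)))
  E2 : ∑ j, ∑ k, ((a1 k) (b0 j) ⊗ₜ[ℂ] (b1 j ⊗ₜ[ℂ] a0 k))
      = ∑ j, ∑ k, (b0 j ⊗ₜ[ℂ] (⁅b1 j, a1 k⁆ ⊗ₜ[ℂ] a0 k))
      + ∑ j, ∑ k, (b0 j ⊗ₜ[ℂ] (a1 k ⊗ₜ[ℂ] (b1 j) (a0 k)))
  E3 : ∑ i, ∑ l, ((a1 i) (b0 l) ⊗ₜ[ℂ] (a0 i ⊗ₜ[ℂ] b1 l))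
      + ∑ j, ∑ l, (b0 j ⊗ₜ[ℂ] ((b1 j) (b0 l) ⊗ₜ[ℂ] b1 l))
      + ∑ j, ∑ l, (b0 j ⊗ₜ[ℂ] (b0 l ⊗ₜ[ℂ] ⁅b1 j, b1 l⁆)) = 0

variable {A : Type*} [CommRing A] [Algebra ℂ A]

/-- `V₁ = span_ℂ{a⁰ᵢ}`. -/
def GeomRMatrixDatum.V1 (D : GeomRMatrixDatum A) : Submodule ℂ A :=
  Submodule.span ℂ (Set.range D.a0)

/-- `V₂ = span_ℂ{b⁰ⱼ}`. -/
def GeomRMatrixDatum.V2 (D : GeomRMatrixDatum A) : Submodule ℂ A :=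
  Submodule.span ℂ (Set.range D.b0)

/-- `V = V₁ + V₂`. -/
def GeomRMatrixDatum.V (D : GeomRMatrixDatum A) : Submodule ℂ A := D.V1 ⊔ D.V2

theorem GeomRMatrixDatum.a0_mem_V (D : GeomRMatrixDatum A) (i : Fin D.m) :
    D.a0 i ∈ D.V :=
  Submodule.mem_sup_left (Submodule.subset_span (Set.mem_range_self i))

theorem GeomRMatrixDatum.b0_mem_V (D : GeomRMatrixDatum A) (j : Fin D.n) :
    D.b0 j ∈ D.V :=
  Submodule.mem_sup_right (Submodule.subset_span (Set.mem_range_self j))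

/-- The span of the `a¹ᵢ` is a Lie subalgebra of `Der(A)`. -/
theorem span_a1_lie_closed (D : GeomRMatrixDatum A) (i k : Fin D.m) :
    ⁅D.a1 i, D.a1 k⁆ ∈ Submodule.span ℂ (Set.range D.a1) := by
  classical
  obtain ⟨f, hf⟩ := exists_dual_fam D.indep_a0 i
  obtain ⟨g, hg⟩ := exists_dual_fam D.indep_a0 k
  let Φ : (Derivation ℂ A A) ⊗[ℂ] (A ⊗[ℂ] A) →ₗ[ℂ] Derivation ℂ A A :=
    (TensorProduct.rid ℂ (Derivation ℂ A A)).toLinearMap ∘ₗ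
      LinearMap.lTensor (Derivation ℂ A A)
        ((TensorProduct.lid ℂ ℂ).toLinearMap ∘ₗ TensorProduct.map f g)
  have hΦ : ∀ (x : Derivation ℂ A A) (y z : A), Φ (x ⊗ₜ (y ⊗ₜ z)) = (f y * g z) • x := by
    intro x y z
    simp [Φ, TensorProduct.smul_tmul', mul_comm, smul_smul]
  have h := congrArg Φ D.E1
  simp only [map_sum, map_add, hΦ, hf, hg] at h
  have hLHS : (∑ i', ∑ k', ((if i' = i then (1:ℂ) else 0) * (if k' = k then 1 else 0)) •
      ⁅D.a1 i', D.a1 k'⁆) = ⁅D.a1 i, D.a1 k⁆ := by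
    simp [ite_smul, mul_ite, Finset.sum_ite_eq']
  rw [hLHS] at h
  rw [h]
  refine Submodule.add_mem _ ?_ ?_ <;>
    exact Submodule.sum_mem _ fun i' _ => Submodule.sum_mem _ fun k' _ =>
      Submodule.smul_mem _ _ (Submodule.subset_span (Set.mem_range_self _))
end

section
/- Given a geometric classical r-matrix datum on A, the ℂ-span of {b¹_1,…,b¹_n} is a Lie subalgebra of Der(A): for all j,l one has [b¹ⱼ,b¹ₗ] ∈ span_ℂ{b¹_1,…,b¹_n}. -/
open TensorProduct

set_option synthInstance.maxHeartbeats 1000000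
set_option maxHeartbeats 1000000

variable {A : Type*} [CommRing A] [Algebra ℂ A]

lemma exists_dual_functional {ι : Type*} [DecidableEq ι] {M : Type*} [AddCommGroup M] [Module ℂ M]
    {v : ι → M} (hv : LinearIndependent ℂ v) (j : ι) :
    ∃ f : M →ₗ[ℂ] ℂ, ∀ k, f (v k) = if k = j then 1 else 0 := by
  classical
  set p := Submodule.span ℂ (Set.range v) with hp
  let f0 : p →ₗ[ℂ] ℂ := (Finsupp.lapply j).comp (hv.repr : p →ₗ[ℂ] ι →₀ ℂ)
  obtain ⟨g, hg⟩ := f0.exists_extend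
  refine ⟨g, fun k => ?_⟩
  have hmem : v k ∈ p := Submodule.subset_span ⟨k, rfl⟩
  have h1 : g (v k) = f0 ⟨v k, hmem⟩ := LinearMap.congr_fun hg ⟨v k, hmem⟩
  rw [h1]
  have h2 : hv.repr ⟨v k, hmem⟩ = Finsupp.single k 1 :=
    hv.repr_eq_single k ⟨v k, hmem⟩ rfl
  simp [f0, h2, Finsupp.single_apply]

/-- The span of the `b¹ⱼ` is a Lie subalgebra of `Der(A)`. -/
theorem span_b1_lie_closed (D : GeomRMatrixDatum A) (j l : Fin D.n) :
    ⁅D.b1 j, D.b1 l⁆ ∈ Submodule.span ℂ (Set.range D.b1) := by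
  classical
  obtain ⟨f, hf⟩ := exists_dual_functional D.indep_b0 j
  obtain ⟨g, hg⟩ := exists_dual_functional D.indep_b0 l
  let inner : A ⊗[ℂ] Derivation ℂ A A →ₗ[ℂ] Derivation ℂ A A :=
    TensorProduct.lift (g.smulRight (LinearMap.id : Derivation ℂ A A →ₗ[ℂ] Derivation ℂ A A))
  let φ : A ⊗[ℂ] (A ⊗[ℂ] Derivation ℂ A A) →ₗ[ℂ] Derivation ℂ A A :=
    TensorProduct.lift (f.smulRight inner)
  have h := congrArg φ D.E3
  simp only [map_add, map_sum, map_zero, φ, inner, TensorProduct.lift.tmul,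
    LinearMap.smulRight_apply, LinearMap.id_apply, LinearMap.smul_apply, smul_smul] at h
  simp only [hf, hg, ite_smul, one_smul, zero_smul, mul_ite, mul_one, mul_zero, ite_mul,
    one_mul, zero_mul, smul_ite, smul_zero, Finset.sum_ite_eq', Finset.sum_ite_eq,
    Finset.mem_univ, if_true] at h
  have h2 : (∑ x : Fin D.n, ∑ x1 : Fin D.n,
        if x = j then g ((D.b1 x) (D.b0 x1)) • D.b1 x1 else (0 : Derivation ℂ A A))
      = ∑ x1, g ((D.b1 j) (D.b0 x1)) • D.b1 x1 := by
    rw [Finset.sum_eq_single_of_mem j (Finset.mem_univ j)]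
    · simp
    · intro b _ hb; simp [hb]
  rw [h2] at h
  have hlie : ⁅D.b1 j, D.b1 l⁆ =
      -(∑ i, ∑ l', (f ((D.a1 i) (D.b0 l')) * g (D.a0 i)) • D.b1 l')
      - (∑ l', g ((D.b1 j) (D.b0 l')) • D.b1 l') := by
    linear_combination (norm := module) h
  rw [hlie]
  refine sub_mem (neg_mem ?_) ?_
  · exact Submodule.sum_mem _ fun i _ => Submodule.sum_mem _ fun l' _ =>
      Submodule.smul_mem _ _ (Submodule.subset_span ⟨l', rfl⟩)
  · exact Submodule.sum_mem _ fun l' _ =>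
      Submodule.smul_mem _ _ (Submodule.subset_span ⟨l', rfl⟩)
end

section
/- Given a geometric classical r-matrix datum on A, the derivations preserve the spans of the coefficient functions as follows: a¹ᵢ(a⁰ₖ) ∈ V for all i,k; a¹ᵢ(b⁰ⱼ) ∈ V₂ for all i,j; b¹ⱼ(a⁰ᵢ) ∈ V₁ for all i,j; and b¹ⱼ(b⁰ₗ) ∈ V for all j,l. In particular V is invariant under every a¹ᵢ and every b¹ⱼ. -/
open TensorProduct

set_option synthInstance.maxHeartbeats 1000000
set_option maxHeartbeats 1000000

variable {A : Type*} [CommRing A] [Algebra ℂ A]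

theorem exists_dual' {M : Type*} [AddCommGroup M] [Module ℂ M]
    {ι : Type*} [DecidableEq ι] {v : ι → M} (hv : LinearIndependent ℂ v) (j0 : ι) :
    ∃ φ : M →ₗ[ℂ] ℂ, ∀ j, φ (v j) = if j = j0 then 1 else 0 := by
  obtain ⟨φ, hφ⟩ := LinearMap.exists_extend ((Finsupp.lapply j0).comp hv.repr)
  refine ⟨φ, fun j => ?_⟩
  have hm : v j ∈ Submodule.span ℂ (Set.range v) := Submodule.subset_span ⟨j, rfl⟩
  have h2 := LinearMap.congr_fun hφ ⟨v j, hm⟩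
  simp only [LinearMap.comp_apply, Submodule.coe_subtype] at h2
  rw [h2, hv.repr_eq_single j ⟨v j, hm⟩ rfl]
  simp [Finsupp.single_apply]
theorem sum_sum_ite {α β M : Type*} [Fintype α] [Fintype β] [DecidableEq α]
    [AddCommMonoid M] (j0 : α) (f : α → β → M) :
    (∑ x : α, ∑ y : β, (if x = j0 then f x y else 0)) = ∑ y : β, f j0 y := by
  rw [Finset.sum_comm]
  simp

-- claim 3: b1 j (a0 k) ∈ V1, from E2 with λ dual b0 on slot1, μ dual a1 on slot2
theorem claim3 (D : GeomRMatrixDatum A) (j0 : Fin D.n) (k0 : Fin D.m) :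
    D.b1 j0 (D.a0 k0) ∈ D.V1 := by
  obtain ⟨lam, hlam⟩ := exists_dual' D.indep_b0 j0
  obtain ⟨mu, hmu⟩ := exists_dual' D.indep_a1 k0
  set F : A ⊗[ℂ] (Derivation ℂ A A ⊗[ℂ] A) →ₗ[ℂ] A :=
    (TensorProduct.lid ℂ A).toLinearMap
      ∘ₗ (LinearMap.rTensor A mu)
      ∘ₗ (TensorProduct.lid ℂ (Derivation ℂ A A ⊗[ℂ] A)).toLinearMap
      ∘ₗ (LinearMap.rTensor (Derivation ℂ A A ⊗[ℂ] A) lam) with hF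
  have hE := congrArg F D.E2
  simp only [map_add, map_sum, hF, LinearMap.comp_apply, LinearMap.rTensor_tmul,
    TensorProduct.lid_tmul, LinearMap.map_smul, LinearEquiv.coe_coe, hlam, hmu,
    ite_smul, one_smul, zero_smul, smul_zero, Finset.sum_ite_eq', Finset.mem_univ,
    if_true, Finset.sum_ite_eq, apply_ite, map_zero, sum_sum_ite] at hE
  rw [← sub_eq_iff_eq_add'] at hE
  rw [← hE]
  refine sub_mem ?_ (Submodule.sum_mem _ fun k _ =>
    Submodule.smul_mem _ _ (Submodule.subset_span ⟨k, rfl⟩))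
  exact Submodule.sum_mem _ fun x _ => Submodule.sum_mem _ fun k _ =>
    Submodule.smul_mem _ _ (Submodule.smul_mem _ _ (Submodule.subset_span ⟨k, rfl⟩))

theorem claim2 (D : GeomRMatrixDatum A) (k0 : Fin D.m) (j0 : Fin D.n) :
    D.a1 k0 (D.b0 j0) ∈ D.V2 := by
  obtain ⟨mu, hmu⟩ := exists_dual' D.indep_b1 j0
  obtain ⟨nu, hnu⟩ := exists_dual' D.indep_a0 k0
  set F : A ⊗[ℂ] (Derivation ℂ A A ⊗[ℂ] A) →ₗ[ℂ] A :=
    (TensorProduct.rid ℂ A).toLinearMap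
      ∘ₗ (LinearMap.lTensor A ((LinearMap.mul' ℂ ℂ) ∘ₗ TensorProduct.map mu nu)) with hF
  have hE := congrArg F D.E2
  simp only [map_add, map_sum, hF, LinearMap.comp_apply, LinearMap.lTensor_tmul,
    TensorProduct.map_tmul, LinearMap.mul'_apply, TensorProduct.rid_tmul, LinearEquiv.coe_coe,
    hmu, hnu, mul_ite, ite_mul, one_mul, mul_one, zero_mul, mul_zero,
    ite_smul, one_smul, zero_smul, smul_zero, apply_ite, map_zero, sum_sum_ite,
    Finset.sum_ite_eq', Finset.mem_univ, if_true] at hE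
  rw [hE]
  exact add_mem
    (Submodule.sum_mem _ fun x _ =>
      Submodule.smul_mem _ _ (Submodule.subset_span ⟨x, rfl⟩))
    (Submodule.sum_mem _ fun x _ => Submodule.sum_mem _ fun k _ =>
      Submodule.smul_mem _ _ (Submodule.subset_span ⟨x, rfl⟩))

theorem claim1 (D : GeomRMatrixDatum A) (i0 k0 : Fin D.m) :
    D.a1 k0 (D.a0 i0) ∈ D.V := by
  obtain ⟨mu, hmu⟩ := exists_dual' D.indep_a1 i0
  obtain ⟨nu, hnu⟩ := exists_dual' D.indep_a0 k0
  set F : Derivation ℂ A A ⊗[ℂ] (A ⊗[ℂ] A) →ₗ[ℂ] A :=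
    ((TensorProduct.rid ℂ A).toLinearMap ∘ₗ LinearMap.lTensor A nu)
      ∘ₗ (TensorProduct.lid ℂ (A ⊗[ℂ] A)).toLinearMap
      ∘ₗ LinearMap.rTensor (A ⊗[ℂ] A) mu with hF
  have hE := congrArg F D.E1
  simp only [map_add, map_sum, hF, LinearMap.comp_apply, LinearMap.rTensor_tmul,
    LinearMap.lTensor_tmul, TensorProduct.lid_tmul, TensorProduct.rid_tmul,
    LinearMap.map_smul, LinearEquiv.coe_coe, hmu, hnu,
    ite_smul, one_smul, zero_smul, smul_zero, apply_ite, map_zero, sum_sum_ite,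
    Finset.sum_ite_eq', Finset.mem_univ, if_true] at hE
  rw [← sub_eq_iff_eq_add] at hE
  rw [← hE]
  refine sub_mem (Submodule.mem_sup_left ?_) (Submodule.mem_sup_right ?_)
  · exact Submodule.sum_mem _ fun x _ =>
      Submodule.smul_mem _ _ (Submodule.subset_span ⟨x, rfl⟩)
  · exact Submodule.sum_mem _ fun y _ =>
      Submodule.smul_mem _ _ (Submodule.subset_span ⟨y, rfl⟩)

theorem claim4 (D : GeomRMatrixDatum A) (j0 l0 : Fin D.n) :
    D.b1 j0 (D.b0 l0) ∈ D.V := by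
  obtain ⟨lam, hlam⟩ := exists_dual' D.indep_b0 j0
  obtain ⟨rho, hrho⟩ := exists_dual' D.indep_b1 l0
  set F : A ⊗[ℂ] (A ⊗[ℂ] Derivation ℂ A A) →ₗ[ℂ] A :=
    ((TensorProduct.rid ℂ A).toLinearMap ∘ₗ LinearMap.lTensor A rho)
      ∘ₗ (TensorProduct.lid ℂ (A ⊗[ℂ] Derivation ℂ A A)).toLinearMap
      ∘ₗ LinearMap.rTensor (A ⊗[ℂ] Derivation ℂ A A) lam with hF
  have hE := congrArg F D.E3
  simp only [map_add, map_sum, map_zero, hF, LinearMap.comp_apply, LinearMap.rTensor_tmul,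
    LinearMap.lTensor_tmul, TensorProduct.lid_tmul, TensorProduct.rid_tmul,
    LinearMap.map_smul, LinearEquiv.coe_coe, hlam, hrho,
    ite_smul, one_smul, zero_smul, smul_zero, apply_ite, sum_sum_ite,
    Finset.sum_ite_eq', Finset.mem_univ, if_true] at hE
  have hX : D.b1 j0 (D.b0 l0) =
      0 - (∑ x : Fin D.m, lam ((D.a1 x) (D.b0 l0)) • D.a0 x)
        - ∑ y : Fin D.n, rho ⁅D.b1 j0, D.b1 y⁆ • D.b0 y := by
    rw [← hE]; abel
  rw [hX]
  refine sub_mem (sub_mem (zero_mem _) (Submodule.mem_sup_left ?_))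
    (Submodule.mem_sup_right ?_)
  · exact Submodule.sum_mem _ fun x _ =>
      Submodule.smul_mem _ _ (Submodule.subset_span ⟨x, rfl⟩)
  · exact Submodule.sum_mem _ fun y _ =>
      Submodule.smul_mem _ _ (Submodule.subset_span ⟨y, rfl⟩)

theorem key_inv (D : GeomRMatrixDatum A) (d : Derivation ℂ A A)
    (ha : ∀ k, d (D.a0 k) ∈ D.V) (hb : ∀ j, d (D.b0 j) ∈ D.V) :
    ∀ f ∈ D.V, d f ∈ D.V := by
  intro f hf
  have hV : D.V = Submodule.span ℂ (Set.range D.a0 ∪ Set.range D.b0) :=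
    (Submodule.span_union _ _).symm
  rw [hV] at hf
  induction hf using Submodule.span_induction with
  | mem z hz =>
    rcases hz with ⟨k, rfl⟩ | ⟨j, rfl⟩
    · exact ha k
    · exact hb j
  | zero => simp only [map_zero]; exact zero_mem _
  | add x y _ _ hx hy => rw [map_add]; exact add_mem hx hy
  | smul c x _ hx =>
    rw [Derivation.map_smul]; exact Submodule.smul_mem _ _ hx

/-- The derivations of a geometric classical r-matrix datum preserve the spans of the
coefficient functions: `a¹ᵢ(a⁰ₖ) ∈ V`, `a¹ᵢ(b⁰ⱼ) ∈ V₂`, `b¹ⱼ(a⁰ᵢ) ∈ V₁`, `b¹ⱼ(b⁰ₗ) ∈ V`;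
in particular `V` is invariant under every `a¹ᵢ` and every `b¹ⱼ`. -/
theorem derivations_preserve_spans (D : GeomRMatrixDatum A) :
    (∀ (i k : Fin D.m), D.a1 i (D.a0 k) ∈ D.V) ∧
    (∀ (i : Fin D.m) (j : Fin D.n), D.a1 i (D.b0 j) ∈ D.V2) ∧
    (∀ (i : Fin D.m) (j : Fin D.n), D.b1 j (D.a0 i) ∈ D.V1) ∧
    (∀ (j l : Fin D.n), D.b1 j (D.b0 l) ∈ D.V) ∧
    (∀ (i : Fin D.m), ∀ f ∈ D.V, D.a1 i f ∈ D.V) ∧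
    (∀ (j : Fin D.n), ∀ f ∈ D.V, D.b1 j f ∈ D.V) := by
  refine ⟨fun i k => claim1 D k i, fun i j => claim2 D i j, fun i j => claim3 D j i,
    fun j l => claim4 D j l, fun i => key_inv D _ (fun k => claim1 D k i)
      (fun j => Submodule.mem_sup_right (claim2 D i j)),
    fun j => key_inv D _ (fun i => Submodule.mem_sup_left (claim3 D j i))
      (fun l => claim4 D j l)⟩
end

section
/- Given a geometric classical r-matrix datum on A with V invariant under every a¹ᵢ and b¹ⱼ, the bracket [x,y] := x∘y + y⋆x makes the dual space V* into a Lie algebra over ℂ: it is bilinear, satisfies [x,y] = −[y,x], and satisfies the Jacobi identity [x,[y,z]] + [y,[z,x]] + [z,[x,y]] = 0 for all x,y,z ∈ V*. -/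
open TensorProduct

set_option synthInstance.maxHeartbeats 1000000
set_option maxHeartbeats 1000000

variable {A : Type*} [CommRing A] [Algebra ℂ A]

/-- The operation `(x⋆y)(f) = Σᵢ x(a⁰ᵢ)·y(a¹ᵢ f)` on `V* = Module.Dual ℂ V`. -/
noncomputable def starOp (D : GeomRMatrixDatum A)
    (hA : ∀ i : Fin D.m, ∀ f ∈ D.V, D.a1 i f ∈ D.V)
    (x y : Module.Dual ℂ D.V) : Module.Dual ℂ D.V :=
  ∑ i, x ⟨D.a0 i, D.a0_mem_V i⟩ • (y ∘ₗ ((D.a1 i).toLinearMap.restrict (hA i)))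

/-- The operation `(x∘y)(f) = Σⱼ y(b⁰ⱼ)·x(b¹ⱼ f)` on `V* = Module.Dual ℂ V`. -/
noncomputable def circOp (D : GeomRMatrixDatum A)
    (hB : ∀ j : Fin D.n, ∀ f ∈ D.V, D.b1 j f ∈ D.V)
    (x y : Module.Dual ℂ D.V) : Module.Dual ℂ D.V :=
  ∑ j, y ⟨D.b0 j, D.b0_mem_V j⟩ • (x ∘ₗ ((D.b1 j).toLinearMap.restrict (hB j)))

/-- The bracket `[x,y] = x∘y + y⋆x` on `V*`. -/
noncomputable def bracketOp (D : GeomRMatrixDatum A)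
    (hA : ∀ i : Fin D.m, ∀ f ∈ D.V, D.a1 i f ∈ D.V)
    (hB : ∀ j : Fin D.n, ∀ f ∈ D.V, D.b1 j f ∈ D.V)
    (x y : Module.Dual ℂ D.V) : Module.Dual ℂ D.V :=
  circOp D hB x y + starOp D hA y x



namespace GeomR

/-- evaluation of derivations at a fixed element, as a linear map -/
noncomputable def evalD (g : A) : Derivation ℂ A A →ₗ[ℂ] A where
  toFun d := d g
  map_add' d e := by simp
  map_smul' c d := by simp

@[simp] lemma evalD_apply (g : A) (d : Derivation ℂ A A) : evalD g d = d g := rfl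

/-- pairing of two functionals on the two factors -/
noncomputable def pairAA (φ ψ : A →ₗ[ℂ] ℂ) : A ⊗[ℂ] A →ₗ[ℂ] ℂ :=
  TensorProduct.lift (φ.smulRight ψ)

@[simp] lemma pairAA_tmul (φ ψ : A →ₗ[ℂ] ℂ) (u v : A) :
    pairAA φ ψ (u ⊗ₜ[ℂ] v) = φ u * ψ v := by
  simp [pairAA, smul_eq_mul]

/-- `smulRight` as a linear map in its vector argument. -/
noncomputable def smulRightL {M M₂ : Type*} [AddCommMonoid M] [Module ℂ M]
    [AddCommMonoid M₂] [Module ℂ M₂] (c : M →ₗ[ℂ] ℂ) :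
    M₂ →ₗ[ℂ] (M →ₗ[ℂ] M₂) where
  toFun x := c.smulRight x
  map_add' x y := LinearMap.ext fun mm => smul_add (c mm) x y
  map_smul' a x := LinearMap.ext fun mm => smul_comm (c mm) a x

@[simp] lemma smulRightL_apply {M M₂ : Type*} [AddCommMonoid M] [Module ℂ M]
    [AddCommMonoid M₂] [Module ℂ M₂] (c : M →ₗ[ℂ] ℂ) (x : M₂) (mm : M) :
    smulRightL c x mm = c mm • x := rfl

/-- contraction for E1 : evaluate the derivation slot at `g`, pair remaining slots -/
noncomputable def K1 (φ ψ : A →ₗ[ℂ] ℂ) (g : A) :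
    Derivation ℂ A A ⊗[ℂ] (A ⊗[ℂ] A) →ₗ[ℂ] A :=
  TensorProduct.lift ((smulRightL (pairAA φ ψ)).comp (evalD g))

@[simp] lemma K1_tmul (φ ψ : A →ₗ[ℂ] ℂ) (g u v : A) (d : Derivation ℂ A A) :
    K1 φ ψ g (d ⊗ₜ[ℂ] (u ⊗ₜ[ℂ] v)) = (φ u * ψ v) • d g := by
  simp only [K1, TensorProduct.lift.tmul, LinearMap.coe_comp, Function.comp_apply,
    evalD_apply, smulRightL_apply, pairAA_tmul]

noncomputable def K2 (φ ψ : A →ₗ[ℂ] ℂ) (g : A) :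
    A ⊗[ℂ] (Derivation ℂ A A ⊗[ℂ] A) →ₗ[ℂ] A :=
  TensorProduct.lift (φ.smulRight (TensorProduct.lift ((smulRightL ψ).comp (evalD g))))

@[simp] lemma K2_tmul (φ ψ : A →ₗ[ℂ] ℂ) (g u v : A) (d : Derivation ℂ A A) :
    K2 φ ψ g (u ⊗ₜ[ℂ] (d ⊗ₜ[ℂ] v)) = φ u • ψ v • d g := by
  simp only [K2, TensorProduct.lift.tmul, LinearMap.smulRight_apply, LinearMap.coe_comp,
    Function.comp_apply, evalD_apply, smulRightL_apply, LinearMap.smul_apply]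

noncomputable def K3 (φ ψ : A →ₗ[ℂ] ℂ) (g : A) :
    A ⊗[ℂ] (A ⊗[ℂ] Derivation ℂ A A) →ₗ[ℂ] A :=
  TensorProduct.lift (φ.smulRight (TensorProduct.lift (ψ.smulRight (evalD g))))

@[simp] lemma K3_tmul (φ ψ : A →ₗ[ℂ] ℂ) (g u v : A) (d : Derivation ℂ A A) :
    K3 φ ψ g (u ⊗ₜ[ℂ] (v ⊗ₜ[ℂ] d)) = φ u • ψ v • d g := by
  simp only [K3, TensorProduct.lift.tmul, LinearMap.smulRight_apply, LinearMap.smul_apply,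
    evalD_apply]

variable (D : GeomRMatrixDatum A)

noncomputable def LA (φ : A →ₗ[ℂ] ℂ) : A →ₗ[ℂ] A :=
  ∑ i, φ (D.a0 i) • (D.a1 i).toLinearMap

noncomputable def MA (φ : A →ₗ[ℂ] ℂ) : A →ₗ[ℂ] A :=
  ∑ j, φ (D.b0 j) • (D.b1 j).toLinearMap

noncomputable def NA (φ : A →ₗ[ℂ] ℂ) : A →ₗ[ℂ] A := LA D φ + MA D φ

lemma LA_apply (φ : A →ₗ[ℂ] ℂ) (g : A) :
    LA D φ g = ∑ i, φ (D.a0 i) • (D.a1 i) g := by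
  simp [LA]

lemma MA_apply (φ : A →ₗ[ℂ] ℂ) (g : A) :
    MA D φ g = ∑ j, φ (D.b0 j) • (D.b1 j) g := by
  simp [MA]

lemma NA_apply (φ : A →ₗ[ℂ] ℂ) (g : A) :
    NA D φ g = LA D φ g + MA D φ g := rfl

/-- generic expansion of a double application -/
lemma gen_app {p q : ℕ} (c : Fin p → ℂ) (d : Fin p → Derivation ℂ A A)
    (w : Fin q → ℂ) (e : Fin q → Derivation ℂ A A) (g : A) :
    (∑ i, c i • (d i).toLinearMap) ((∑ k, w k • (e k).toLinearMap) g)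
      = ∑ i, ∑ k, (c i * w k) • (d i) ((e k) g) := by
  simp only [LinearMap.sum_apply, LinearMap.smul_apply, Derivation.coeFn_coe]
  refine Finset.sum_congr rfl fun i _ => ?_
  rw [map_sum, Finset.smul_sum]
  refine Finset.sum_congr rfl fun k _ => ?_
  rw [Derivation.map_smul, smul_smul]

lemma LA_LA (φ ψ : A →ₗ[ℂ] ℂ) (g : A) :
    LA D φ (LA D ψ g) = ∑ i, ∑ k, (φ (D.a0 i) * ψ (D.a0 k)) • (D.a1 i) ((D.a1 k) g) :=
  gen_app _ _ _ _ g

lemma MA_LA (φ ψ : A →ₗ[ℂ] ℂ) (g : A) :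
    MA D φ (LA D ψ g) = ∑ j, ∑ k, (φ (D.b0 j) * ψ (D.a0 k)) • (D.b1 j) ((D.a1 k) g) :=
  gen_app _ _ _ _ g

lemma LA_MA (φ ψ : A →ₗ[ℂ] ℂ) (g : A) :
    LA D φ (MA D ψ g) = ∑ i, ∑ l, (φ (D.a0 i) * ψ (D.b0 l)) • (D.a1 i) ((D.b1 l) g) :=
  gen_app _ _ _ _ g

lemma MA_MA (φ ψ : A →ₗ[ℂ] ℂ) (g : A) :
    MA D φ (MA D ψ g) = ∑ j, ∑ l, (φ (D.b0 j) * ψ (D.b0 l)) • (D.b1 j) ((D.b1 l) g) :=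
  gen_app _ _ _ _ g

/-- expansion of `LA` applied to a composite functional `φ ∘ₗ T`. -/
lemma LA_comp {q : ℕ} (φ ψ : A →ₗ[ℂ] ℂ) (w : Fin q → A) (e : Fin q → Derivation ℂ A A)
    (g : A) :
    LA D (φ ∘ₗ (∑ k, ψ (w k) • (e k).toLinearMap)) g
      = ∑ i, ∑ k, (ψ (w k) * φ ((e k) (D.a0 i))) • (D.a1 i) g := by
  rw [LA_apply]
  refine Finset.sum_congr rfl fun i _ => ?_
  rw [LinearMap.comp_apply, LinearMap.sum_apply]
  rw [map_sum, Finset.sum_smul]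
  refine Finset.sum_congr rfl fun k _ => ?_
  simp only [LinearMap.smul_apply, Derivation.coeFn_coe, map_smul, smul_eq_mul]

lemma MA_comp {q : ℕ} (φ ψ : A →ₗ[ℂ] ℂ) (w : Fin q → A) (e : Fin q → Derivation ℂ A A)
    (g : A) :
    MA D (φ ∘ₗ (∑ k, ψ (w k) • (e k).toLinearMap)) g
      = ∑ j, ∑ k, (ψ (w k) * φ ((e k) (D.b0 j))) • (D.b1 j) g := by
  rw [MA_apply]
  refine Finset.sum_congr rfl fun j _ => ?_
  rw [LinearMap.comp_apply, LinearMap.sum_apply]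
  rw [map_sum, Finset.sum_smul]
  refine Finset.sum_congr rfl fun k _ => ?_
  simp only [LinearMap.smul_apply, Derivation.coeFn_coe, map_smul, smul_eq_mul]

lemma h1A (φ ψ : A →ₗ[ℂ] ℂ) (g : A) :
    LA D φ (LA D ψ g) - LA D ψ (LA D φ g)
      = LA D (φ ∘ₗ LA D ψ) g + LA D (ψ ∘ₗ MA D φ) g := by
  have H := congrArg (K1 φ ψ g) D.E1
  simp only [map_sum, map_add, K1_tmul, Derivation.commutator_apply, smul_sub,
    Finset.sum_sub_distrib] at H
  have e2 : LA D ψ (LA D φ g)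
      = ∑ i, ∑ k, (φ (D.a0 i) * ψ (D.a0 k)) • (D.a1 k) ((D.a1 i) g) := by
    rw [LA_LA, Finset.sum_comm]
    exact Finset.sum_congr rfl fun i _ => Finset.sum_congr rfl fun k _ => by
      rw [mul_comm]
  have e3 : LA D (φ ∘ₗ LA D ψ) g
      = ∑ i, ∑ k, (φ ((D.a1 k) (D.a0 i)) * ψ (D.a0 k)) • (D.a1 i) g := by
    rw [show LA D ψ = ∑ k, ψ (D.a0 k) • (D.a1 k).toLinearMap from rfl, LA_comp]
    exact Finset.sum_congr rfl fun i _ => Finset.sum_congr rfl fun k _ => by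
      rw [mul_comm]
  have e4 : LA D (ψ ∘ₗ MA D φ) g
      = ∑ i, ∑ l, (φ (D.b0 l) * ψ ((D.b1 l) (D.a0 i))) • (D.a1 i) g := by
    rw [show MA D φ = ∑ l, φ (D.b0 l) • (D.b1 l).toLinearMap from rfl, LA_comp]
  rw [LA_LA, e2, e3, e4]
  exact H

lemma h2A (φ ψ : A →ₗ[ℂ] ℂ) (g : A) :
    MA D (φ ∘ₗ LA D ψ) g
      = MA D φ (LA D ψ g) - LA D ψ (MA D φ g) + LA D (ψ ∘ₗ MA D φ) g := by
  have H := congrArg (K2 φ ψ g) D.E2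
  simp only [map_sum, map_add, K2_tmul, Derivation.commutator_apply, smul_sub, smul_smul,
    Finset.sum_sub_distrib] at H
  have e1 : MA D (φ ∘ₗ LA D ψ) g
      = ∑ j, ∑ k, (φ ((D.a1 k) (D.b0 j)) * ψ (D.a0 k)) • (D.b1 j) g := by
    rw [show LA D ψ = ∑ k, ψ (D.a0 k) • (D.a1 k).toLinearMap from rfl, MA_comp]
    exact Finset.sum_congr rfl fun j _ => Finset.sum_congr rfl fun k _ => by rw [mul_comm]
  have e2 : LA D ψ (MA D φ g)
      = ∑ j, ∑ k, (φ (D.b0 j) * ψ (D.a0 k)) • (D.a1 k) ((D.b1 j) g) := by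
    rw [LA_MA, Finset.sum_comm]
    exact Finset.sum_congr rfl fun j _ => Finset.sum_congr rfl fun k _ => by rw [mul_comm]
  have e3 : LA D (ψ ∘ₗ MA D φ) g
      = ∑ j, ∑ k, (φ (D.b0 j) * ψ ((D.b1 j) (D.a0 k))) • (D.a1 k) g := by
    rw [show MA D φ = ∑ l, φ (D.b0 l) • (D.b1 l).toLinearMap from rfl, LA_comp]
    rw [Finset.sum_comm]
  rw [e1, e2, e3, MA_LA]
  rw [H]

lemma h3A (φ ψ : A →ₗ[ℂ] ℂ) (g : A) :
    MA D (φ ∘ₗ LA D ψ) g + MA D (ψ ∘ₗ MA D φ) g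
      + (MA D φ (MA D ψ g) - MA D ψ (MA D φ g)) = 0 := by
  have H := congrArg (K3 φ ψ g) D.E3
  simp only [map_sum, map_add, map_zero, K3_tmul, Derivation.commutator_apply, smul_sub,
    smul_smul, Finset.sum_sub_distrib] at H
  have e1 : MA D (φ ∘ₗ LA D ψ) g
      = ∑ i, ∑ l, (φ ((D.a1 i) (D.b0 l)) * ψ (D.a0 i)) • (D.b1 l) g := by
    rw [show LA D ψ = ∑ k, ψ (D.a0 k) • (D.a1 k).toLinearMap from rfl, MA_comp,
      Finset.sum_comm]
    exact Finset.sum_congr rfl fun i _ => Finset.sum_congr rfl fun l _ => by rw [mul_comm]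
  have e2 : MA D (ψ ∘ₗ MA D φ) g
      = ∑ j, ∑ l, (φ (D.b0 j) * ψ ((D.b1 j) (D.b0 l))) • (D.b1 l) g := by
    rw [show MA D φ = ∑ l, φ (D.b0 l) • (D.b1 l).toLinearMap from rfl, MA_comp,
      Finset.sum_comm]
  have e3 : MA D ψ (MA D φ g)
      = ∑ j, ∑ l, (φ (D.b0 j) * ψ (D.b0 l)) • (D.b1 l) ((D.b1 j) g) := by
    rw [MA_MA, Finset.sum_comm]
    exact Finset.sum_congr rfl fun j _ => Finset.sum_congr rfl fun l _ => by rw [mul_comm]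
  rw [e1, e2, e3, MA_MA]
  rw [← H]

lemma NA_def (φ : A →ₗ[ℂ] ℂ) : NA D φ = LA D φ + MA D φ := rfl

lemma LA_arg_add (w₁ w₂ : A →ₗ[ℂ] ℂ) (g : A) :
    LA D (w₁ + w₂) g = LA D w₁ g + LA D w₂ g := by
  simp [LA_apply, add_smul, Finset.sum_add_distrib]

lemma MA_arg_add (w₁ w₂ : A →ₗ[ℂ] ℂ) (g : A) :
    MA D (w₁ + w₂) g = MA D w₁ g + MA D w₂ g := by
  simp [MA_apply, add_smul, Finset.sum_add_distrib]

lemma hNA (φ ψ : A →ₗ[ℂ] ℂ) (g : A) :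
    NA D φ (NA D ψ g)
      = NA D ψ (NA D φ g) + LA D (φ ∘ₗ NA D ψ) g - MA D (ψ ∘ₗ NA D φ) g := by
  have G1 := h1A D φ ψ g
  have G2 := h2A D φ ψ g
  have G3 := h2A D ψ φ g
  have G4 := h3A D φ ψ g
  have hc1 : φ ∘ₗ NA D ψ = φ ∘ₗ LA D ψ + φ ∘ₗ MA D ψ := by
    rw [NA_def, LinearMap.comp_add]
  have hc2 : ψ ∘ₗ NA D φ = ψ ∘ₗ LA D φ + ψ ∘ₗ MA D φ := by
    rw [NA_def, LinearMap.comp_add]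
  rw [hc1, hc2, LA_arg_add, MA_arg_add]
  simp only [NA_apply, map_add]
  linear_combination (norm := module) G1 - G2 + G3 + G4

/-- coordinate functional of a linearly independent family, extended to the whole space -/
noncomputable def coordOf {M : Type*} [AddCommGroup M] [Module ℂ M] {ι : Type*}
    {v : ι → M} (hv : LinearIndependent ℂ v) (p : ι) : M →ₗ[ℂ] ℂ :=
  ((Module.Basis.span hv).coord p) ∘ₗ
    (Submodule.projectionOnto _ _
      (Submodule.span ℂ (Set.range v)).exists_isCompl.choose_spec)

lemma coordOf_apply {M : Type*} [AddCommGroup M] [Module ℂ M] {ι : Type*} [DecidableEq ι]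
    {v : ι → M} (hv : LinearIndependent ℂ v) (p i : ι) :
    coordOf hv p (v i) = if i = p then 1 else 0 := by
  have h1 : v i = ((Module.Basis.span hv i : Submodule.span ℂ (Set.range v)) : M) := by
    rw [Module.Basis.span_apply]
  rw [coordOf, LinearMap.comp_apply, h1, Submodule.linearProjOfIsCompl_apply_left,
    Module.Basis.coord_apply, Module.Basis.repr_self_apply]

/-- scalar contraction for E1 -/
noncomputable def K1c (θ : Derivation ℂ A A →ₗ[ℂ] ℂ) (φ ψ : A →ₗ[ℂ] ℂ) :
    Derivation ℂ A A ⊗[ℂ] (A ⊗[ℂ] A) →ₗ[ℂ] ℂ :=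
  TensorProduct.lift (θ.smulRight (pairAA φ ψ))

@[simp] lemma K1c_tmul (θ : Derivation ℂ A A →ₗ[ℂ] ℂ) (φ ψ : A →ₗ[ℂ] ℂ)
    (d : Derivation ℂ A A) (u v : A) :
    K1c θ φ ψ (d ⊗ₜ[ℂ] (u ⊗ₜ[ℂ] v)) = θ d * (φ u * ψ v) := by
  simp only [K1c, TensorProduct.lift.tmul, LinearMap.smulRight_apply, LinearMap.smul_apply,
    pairAA_tmul, smul_eq_mul]

/-- scalar contraction for E3 -/
noncomputable def K3c (θ : Derivation ℂ A A →ₗ[ℂ] ℂ) (φ ψ : A →ₗ[ℂ] ℂ) :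
    A ⊗[ℂ] (A ⊗[ℂ] Derivation ℂ A A) →ₗ[ℂ] ℂ :=
  TensorProduct.lift (φ.smulRight (TensorProduct.lift (ψ.smulRight θ)))

@[simp] lemma K3c_tmul (θ : Derivation ℂ A A →ₗ[ℂ] ℂ) (φ ψ : A →ₗ[ℂ] ℂ)
    (d : Derivation ℂ A A) (u v : A) :
    K3c θ φ ψ (u ⊗ₜ[ℂ] (v ⊗ₜ[ℂ] d)) = φ u * (ψ v * θ d) := by
  simp only [K3c, TensorProduct.lift.tmul, LinearMap.smulRight_apply, LinearMap.smul_apply,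
    smul_eq_mul]

lemma sum_antisymm {p : ℕ} (c : Fin p → Fin p → ℂ) (s : Fin p → Fin p → ℂ)
    (hc : ∀ i k, c i k = - c k i) (hs : ∀ i k, s i k = s k i) :
    ∑ i, ∑ k, c i k * s i k = 0 := by
  have h : (∑ i, ∑ k, c i k * s i k) = - ∑ i, ∑ k, c i k * s i k := by
    conv_lhs => rw [Finset.sum_comm]
    rw [← Finset.sum_neg_distrib]
    refine Finset.sum_congr rfl fun i _ => ?_
    rw [← Finset.sum_neg_distrib]
    refine Finset.sum_congr rfl fun k _ => ?_
    rw [hc k i, hs k i]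
    ring
  have h2 : (2 : ℂ) * (∑ i, ∑ k, c i k * s i k) = 0 := by linear_combination h
  exact (mul_eq_zero.mp h2).resolve_left two_ne_zero

lemma phi_NA (φ ψ : A →ₗ[ℂ] ℂ) (g : A) :
    φ (NA D ψ g)
      = ∑ k, ψ (D.a0 k) * φ ((D.a1 k) g) + ∑ l, ψ (D.b0 l) * φ ((D.b1 l) g) := by
  rw [NA_apply, map_add, LA_apply, MA_apply, map_sum, map_sum]
  congr 1 <;> exact Finset.sum_congr rfl fun _ _ => by rw [map_smul, smul_eq_mul]

lemma sum_extract {p' q : ℕ} {v : Fin p' → Derivation ℂ A A}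
    (hv : LinearIndependent ℂ v) (p : Fin p') (T : Fin p' → Fin q → ℂ) :
    ∑ i, ∑ k, coordOf hv p (v i) * T i k = ∑ k, T p k := by
  simp only [coordOf_apply, ite_mul, one_mul, zero_mul]
  rw [Finset.sum_comm]
  simp [Finset.sum_ite_eq', Finset.mem_univ]

lemma HA_a0 (φ ψ : A →ₗ[ℂ] ℂ) (p : Fin D.m) :
    φ (NA D ψ (D.a0 p)) + ψ (NA D φ (D.a0 p)) = 0 := by
  have H1 := congrArg (K1c (coordOf D.indep_a1 p) φ ψ) D.E1
  have H2 := congrArg (K1c (coordOf D.indep_a1 p) ψ φ) D.E1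
  simp only [map_sum, map_add, K1c_tmul] at H1 H2
  rw [sum_extract D.indep_a1 p, sum_extract D.indep_a1 p] at H1 H2
  have hzero : (∑ i, ∑ k, coordOf D.indep_a1 p ⁅D.a1 i, D.a1 k⁆ * (φ (D.a0 i) * ψ (D.a0 k)))
      + (∑ i, ∑ k, coordOf D.indep_a1 p ⁅D.a1 i, D.a1 k⁆ * (ψ (D.a0 i) * φ (D.a0 k)))
        = 0 := by
    simp only [← Finset.sum_add_distrib, ← mul_add]
    refine sum_antisymm _ _ (fun i k => ?_) (fun i k => by ring)
    rw [show ⁅D.a1 i, D.a1 k⁆ = -⁅D.a1 k, D.a1 i⁆ from (lie_skew _ _).symm, map_neg]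
  have m1 : ∑ k, ψ (D.a0 k) * φ ((D.a1 k) (D.a0 p))
      = ∑ k, φ ((D.a1 k) (D.a0 p)) * ψ (D.a0 k) :=
    Finset.sum_congr rfl fun _ _ => mul_comm _ _
  have m2 : ∑ k, φ (D.a0 k) * ψ ((D.a1 k) (D.a0 p))
      = ∑ k, ψ ((D.a1 k) (D.a0 p)) * φ (D.a0 k) :=
    Finset.sum_congr rfl fun _ _ => mul_comm _ _
  rw [phi_NA, phi_NA]
  linear_combination m1 + m2 - H1 - H2 + hzero

lemma sum_extract' {p' q : ℕ} {v : Fin p' → Derivation ℂ A A}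
    (hv : LinearIndependent ℂ v) (p : Fin p') (T : Fin q → Fin p' → ℂ) :
    ∑ i, ∑ l, coordOf hv p (v l) * T i l = ∑ i, T i p := by
  simp [coordOf_apply, ite_mul, one_mul, zero_mul, Finset.sum_ite_eq', Finset.mem_univ]

lemma HA_b0 (φ ψ : A →ₗ[ℂ] ℂ) (q : Fin D.n) :
    φ (NA D ψ (D.b0 q)) + ψ (NA D φ (D.b0 q)) = 0 := by
  have H1 := congrArg (K3c (coordOf D.indep_b1 q) φ ψ) D.E3
  have H2 := congrArg (K3c (coordOf D.indep_b1 q) ψ φ) D.E3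
  simp only [map_sum, map_add, map_zero, K3c_tmul] at H1 H2
  have e11 : ∑ i, ∑ l, φ ((D.a1 i) (D.b0 l)) * (ψ (D.a0 i) * coordOf D.indep_b1 q (D.b1 l))
      = ∑ i, φ ((D.a1 i) (D.b0 q)) * ψ (D.a0 i) := by
    rw [show (∑ i, ∑ l, φ ((D.a1 i) (D.b0 l)) * (ψ (D.a0 i) * coordOf D.indep_b1 q (D.b1 l)))
        = ∑ i, ∑ l, coordOf D.indep_b1 q (D.b1 l)
            * (φ ((D.a1 i) (D.b0 l)) * ψ (D.a0 i)) from
      Finset.sum_congr rfl fun i _ => Finset.sum_congr rfl fun l _ => by ring]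
    rw [sum_extract' D.indep_b1 q]
  have e21 : ∑ i, ∑ l, ψ ((D.a1 i) (D.b0 l)) * (φ (D.a0 i) * coordOf D.indep_b1 q (D.b1 l))
      = ∑ i, ψ ((D.a1 i) (D.b0 q)) * φ (D.a0 i) := by
    rw [show (∑ i, ∑ l, ψ ((D.a1 i) (D.b0 l)) * (φ (D.a0 i) * coordOf D.indep_b1 q (D.b1 l)))
        = ∑ i, ∑ l, coordOf D.indep_b1 q (D.b1 l)
            * (ψ ((D.a1 i) (D.b0 l)) * φ (D.a0 i)) from
      Finset.sum_congr rfl fun i _ => Finset.sum_congr rfl fun l _ => by ring]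
    rw [sum_extract' D.indep_b1 q]
  have e12 : ∑ j, ∑ l, φ (D.b0 j) * (ψ ((D.b1 j) (D.b0 l)) * coordOf D.indep_b1 q (D.b1 l))
      = ∑ j, φ (D.b0 j) * ψ ((D.b1 j) (D.b0 q)) := by
    rw [show (∑ j, ∑ l, φ (D.b0 j) * (ψ ((D.b1 j) (D.b0 l)) * coordOf D.indep_b1 q (D.b1 l)))
        = ∑ j, ∑ l, coordOf D.indep_b1 q (D.b1 l)
            * (φ (D.b0 j) * ψ ((D.b1 j) (D.b0 l))) from
      Finset.sum_congr rfl fun j _ => Finset.sum_congr rfl fun l _ => by ring]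
    rw [sum_extract' D.indep_b1 q]
  have e22 : ∑ j, ∑ l, ψ (D.b0 j) * (φ ((D.b1 j) (D.b0 l)) * coordOf D.indep_b1 q (D.b1 l))
      = ∑ j, ψ (D.b0 j) * φ ((D.b1 j) (D.b0 q)) := by
    rw [show (∑ j, ∑ l, ψ (D.b0 j) * (φ ((D.b1 j) (D.b0 l)) * coordOf D.indep_b1 q (D.b1 l)))
        = ∑ j, ∑ l, coordOf D.indep_b1 q (D.b1 l)
            * (ψ (D.b0 j) * φ ((D.b1 j) (D.b0 l))) from
      Finset.sum_congr rfl fun j _ => Finset.sum_congr rfl fun l _ => by ring]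
    rw [sum_extract' D.indep_b1 q]
  have hzero :
      (∑ j, ∑ l, φ (D.b0 j) * (ψ (D.b0 l) * coordOf D.indep_b1 q ⁅D.b1 j, D.b1 l⁆))
      + (∑ j, ∑ l, ψ (D.b0 j) * (φ (D.b0 l) * coordOf D.indep_b1 q ⁅D.b1 j, D.b1 l⁆))
        = 0 := by
    rw [show (∑ j, ∑ l, φ (D.b0 j) * (ψ (D.b0 l) * coordOf D.indep_b1 q ⁅D.b1 j, D.b1 l⁆))
        = ∑ j, ∑ l, coordOf D.indep_b1 q ⁅D.b1 j, D.b1 l⁆ * (φ (D.b0 j) * ψ (D.b0 l)) from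
      Finset.sum_congr rfl fun j _ => Finset.sum_congr rfl fun l _ => by ring]
    rw [show (∑ j, ∑ l, ψ (D.b0 j) * (φ (D.b0 l) * coordOf D.indep_b1 q ⁅D.b1 j, D.b1 l⁆))
        = ∑ j, ∑ l, coordOf D.indep_b1 q ⁅D.b1 j, D.b1 l⁆ * (ψ (D.b0 j) * φ (D.b0 l)) from
      Finset.sum_congr rfl fun j _ => Finset.sum_congr rfl fun l _ => by ring]
    simp only [← Finset.sum_add_distrib, ← mul_add]
    refine sum_antisymm _ _ (fun j l => ?_) (fun j l => by ring)
    rw [show ⁅D.b1 j, D.b1 l⁆ = -⁅D.b1 l, D.b1 j⁆ from (lie_skew _ _).symm, map_neg]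
  have m1 : ∑ k, ψ (D.a0 k) * φ ((D.a1 k) (D.b0 q))
      = ∑ k, φ ((D.a1 k) (D.b0 q)) * ψ (D.a0 k) :=
    Finset.sum_congr rfl fun _ _ => mul_comm _ _
  have m2 : ∑ k, φ (D.a0 k) * ψ ((D.a1 k) (D.b0 q))
      = ∑ k, ψ ((D.a1 k) (D.b0 q)) * φ (D.a0 k) :=
    Finset.sum_congr rfl fun _ _ => mul_comm _ _
  rw [phi_NA, phi_NA]
  linear_combination m1 + m2 - e11 - e21 - e12 - e22 + H1 + H2 - hzero

lemma HA_V (φ ψ : A →ₗ[ℂ] ℂ) {g : A} (hg : g ∈ D.V) :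
    φ (NA D ψ g) + ψ (NA D φ g) = 0 := by
  have hsub : D.V1 ⊔ D.V2 ≤ LinearMap.ker (φ ∘ₗ NA D ψ + ψ ∘ₗ NA D φ) := by
    refine sup_le (Submodule.span_le.mpr ?_) (Submodule.span_le.mpr ?_)
    · rintro _ ⟨p, rfl⟩
      simp only [SetLike.mem_coe, LinearMap.mem_ker, LinearMap.add_apply,
        LinearMap.comp_apply]
      exact HA_a0 D φ ψ p
    · rintro _ ⟨q, rfl⟩
      simp only [SetLike.mem_coe, LinearMap.mem_ker, LinearMap.add_apply,
        LinearMap.comp_apply]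
      exact HA_b0 D φ ψ q
  have := hsub hg
  simpa using this

lemma NA_mem (hA : ∀ i : Fin D.m, ∀ f ∈ D.V, D.a1 i f ∈ D.V)
    (hB : ∀ j : Fin D.n, ∀ f ∈ D.V, D.b1 j f ∈ D.V)
    (φ : A →ₗ[ℂ] ℂ) {g : A} (hg : g ∈ D.V) : NA D φ g ∈ D.V := by
  rw [NA_apply, LA_apply, MA_apply]
  exact add_mem
    (Submodule.sum_mem _ fun i _ => Submodule.smul_mem _ _ (hA i g hg))
    (Submodule.sum_mem _ fun j _ => Submodule.smul_mem _ _ (hB j g hg))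

lemma NA_congr (φ₁ φ₂ : A →ₗ[ℂ] ℂ)
    (ha : ∀ i, φ₁ (D.a0 i) = φ₂ (D.a0 i)) (hb : ∀ j, φ₁ (D.b0 j) = φ₂ (D.b0 j)) (g : A) :
    NA D φ₁ g = NA D φ₂ g := by
  rw [NA_apply, NA_apply, LA_apply, LA_apply, MA_apply, MA_apply]
  congr 1
  · exact Finset.sum_congr rfl fun i _ => by rw [ha i]
  · exact Finset.sum_congr rfl fun j _ => by rw [hb j]

end GeomR

namespace GeomR

variable {D : GeomRMatrixDatum A}

lemma bracket_bridge (hA : ∀ i : Fin D.m, ∀ f ∈ D.V, D.a1 i f ∈ D.V)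
    (hB : ∀ j : Fin D.n, ∀ f ∈ D.V, D.b1 j f ∈ D.V)
    (π : A →ₗ[ℂ] D.V) (hπ : ∀ v : D.V, π ↑v = v)
    (x y : Module.Dual ℂ D.V) (f : D.V) :
    bracketOp D hA hB x y f = (x ∘ₗ π) (NA D (y ∘ₗ π) ↑f) := by
  have key : ∀ (u : A) (hu : u ∈ D.V), π u = ⟨u, hu⟩ := fun u hu => hπ ⟨u, hu⟩
  rw [phi_NA]
  simp only [bracketOp, circOp, starOp, LinearMap.add_apply, LinearMap.sum_apply,
    LinearMap.smul_apply, LinearMap.comp_apply, smul_eq_mul]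
  rw [add_comm]
  congr 1
  · refine Finset.sum_congr rfl fun i _ => ?_
    rw [key (D.a0 i) (D.a0_mem_V i), key ((D.a1 i) ↑f) (hA i ↑f f.2),
      LinearMap.restrict_apply]
    simp only [Derivation.coeFn_coe]
  · refine Finset.sum_congr rfl fun j _ => ?_
    rw [key (D.b0 j) (D.b0_mem_V j), key ((D.b1 j) ↑f) (hB j ↑f f.2),
      LinearMap.restrict_apply]
    simp only [Derivation.coeFn_coe]

end GeomR

/-- The bracket `[x,y] = x∘y + y⋆x` makes `V*` into a Lie algebra: it is bilinear,
antisymmetric, and satisfies the Jacobi identity. -/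
theorem bracketOp_lieAlgebra (D : GeomRMatrixDatum A)
    (hA : ∀ i : Fin D.m, ∀ f ∈ D.V, D.a1 i f ∈ D.V)
    (hB : ∀ j : Fin D.n, ∀ f ∈ D.V, D.b1 j f ∈ D.V) :
    (∀ (x x₂ y : Module.Dual ℂ D.V),
      bracketOp D hA hB (x + x₂) y = bracketOp D hA hB x y + bracketOp D hA hB x₂ y) ∧
    (∀ (c : ℂ) (x y : Module.Dual ℂ D.V),
      bracketOp D hA hB (c • x) y = c • bracketOp D hA hB x y) ∧
    (∀ (x y y₂ : Module.Dual ℂ D.V),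
      bracketOp D hA hB x (y + y₂) = bracketOp D hA hB x y + bracketOp D hA hB x y₂) ∧
    (∀ (c : ℂ) (x y : Module.Dual ℂ D.V),
      bracketOp D hA hB x (c • y) = c • bracketOp D hA hB x y) ∧
    (∀ x y : Module.Dual ℂ D.V, bracketOp D hA hB x y = - bracketOp D hA hB y x) ∧
    (∀ x y z : Module.Dual ℂ D.V,
      bracketOp D hA hB x (bracketOp D hA hB y z)
        + bracketOp D hA hB y (bracketOp D hA hB z x)
        + bracketOp D hA hB z (bracketOp D hA hB x y) = 0) := by
  obtain ⟨W, hW⟩ := Submodule.exists_isCompl D.V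
  set π : A →ₗ[ℂ] D.V := Submodule.linearProjOfIsCompl _ _ hW with hπdef
  have hπ : ∀ v : D.V, π ↑v = v := fun v =>
    Submodule.linearProjOfIsCompl_apply_left hW v
  refine ⟨?_, ?_, ?_, ?_, ?_, ?_⟩
  · intro x x₂ y
    simp only [bracketOp, circOp, starOp, LinearMap.add_comp, smul_add,
      Finset.sum_add_distrib]
    abel
  · intro c x y
    simp only [bracketOp, circOp, starOp, LinearMap.smul_comp, smul_add,
      Finset.smul_sum, smul_smul]
    try simp [mul_comm]
  · intro x y y₂
    simp only [bracketOp, circOp, starOp, LinearMap.add_apply, LinearMap.add_comp,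
      add_smul, smul_add, Finset.sum_add_distrib]
    abel
  · intro c x y
    simp only [bracketOp, circOp, starOp, LinearMap.smul_apply, LinearMap.smul_comp,
      smul_eq_mul, smul_add, Finset.smul_sum, smul_smul]
    try simp [mul_comm]
  · intro x y
    apply LinearMap.ext
    intro f
    rw [GeomR.bracket_bridge hA hB π hπ, LinearMap.neg_apply,
      GeomR.bracket_bridge hA hB π hπ]
    have h := GeomR.HA_V D (x ∘ₗ π) (y ∘ₗ π) f.2
    linear_combination h
  · intro x y z
    apply LinearMap.ext
    intro f
    simp only [LinearMap.add_apply, LinearMap.zero_apply]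
    rw [GeomR.bracket_bridge hA hB π hπ, GeomR.bracket_bridge hA hB π hπ,
      GeomR.bracket_bridge hA hB π hπ]
    set φ := x ∘ₗ π with hφ
    set ψ := y ∘ₗ π with hψ
    set χ := z ∘ₗ π with hχ
    have key : ∀ (u : A) (hu : u ∈ D.V), π u = ⟨u, hu⟩ := fun u hu => hπ ⟨u, hu⟩
    have hconv : ∀ (u v : Module.Dual ℂ D.V) (g : A),
        GeomR.NA D ((bracketOp D hA hB u v) ∘ₗ π) g
          = GeomR.NA D ((u ∘ₗ π) ∘ₗ GeomR.NA D (v ∘ₗ π)) g := by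
      intro u v g
      refine GeomR.NA_congr D _ _ (fun i => ?_) (fun j => ?_) g
      · rw [LinearMap.comp_apply, key (D.a0 i) (D.a0_mem_V i),
          GeomR.bracket_bridge hA hB π hπ]
        rfl
      · rw [LinearMap.comp_apply, key (D.b0 j) (D.b0_mem_V j),
          GeomR.bracket_bridge hA hB π hπ]
        rfl
    rw [hconv y z, hconv z x, hconv x y]
    rw [← hφ, ← hψ, ← hχ]
    clear hconv key
    clear_value φ ψ χ
    clear hφ hψ hχ
    have A1 := GeomR.HA_V D φ (ψ ∘ₗ GeomR.NA D χ) f.2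
    have A2 := GeomR.HA_V D ψ (χ ∘ₗ GeomR.NA D φ) f.2
    have A3 := GeomR.HA_V D χ (φ ∘ₗ GeomR.NA D ψ) f.2
    have Dl := GeomR.HA_V D ψ χ (GeomR.NA_mem D hA hB φ f.2)
    have B := congrArg χ (GeomR.hNA D φ ψ (↑f : A))
    rw [map_sub, map_add] at B
    have hMneg : GeomR.MA D (ψ ∘ₗ GeomR.NA D φ) (↑f : A)
        = - GeomR.MA D (φ ∘ₗ GeomR.NA D ψ) (↑f : A) := by
      rw [GeomR.MA_apply, GeomR.MA_apply, ← Finset.sum_neg_distrib]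
      refine Finset.sum_congr rfl fun j _ => ?_
      rw [LinearMap.comp_apply, LinearMap.comp_apply,
        eq_neg_of_add_eq_zero_left (GeomR.HA_V D ψ φ (D.b0_mem_V j)), neg_smul]
    have C := congrArg χ hMneg
    rw [map_neg] at C
    have E : χ (GeomR.NA D (φ ∘ₗ GeomR.NA D ψ) (↑f : A))
        = χ (GeomR.LA D (φ ∘ₗ GeomR.NA D ψ) (↑f : A))
          + χ (GeomR.MA D (φ ∘ₗ GeomR.NA D ψ) (↑f : A)) := by
      rw [GeomR.NA_apply, map_add]
    simp only [LinearMap.comp_apply] at A1 A2 A3 Dl B C E ⊢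
    linear_combination A1 + A2 - B + C + E - Dl
end

section
/- Given a geometric classical r-matrix datum on A with V invariant under every a¹ᵢ and b¹ⱼ, for all x,y ∈ V* the following two identities hold in Der(A): Σ_{i,k} x(a⁰ᵢ)y(a⁰ₖ)[a¹ᵢ,a¹ₖ] = −Σᵢ ((x⋆y)(a⁰ᵢ) + (x∘y)(a⁰ᵢ))·a¹ᵢ, and Σ_{j,l} x(b⁰ⱼ)y(b⁰ₗ)[b¹ⱼ,b¹ₗ] = Σⱼ ((x⋆y)(b⁰ⱼ) + (x∘y)(b⁰ⱼ))·b¹ⱼ. -/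
open TensorProduct

set_option synthInstance.maxHeartbeats 1000000
set_option maxHeartbeats 1000000

variable {A : Type*} [CommRing A] [Algebra ℂ A]

/-- Contraction of `E1` against two functionals on `A`. -/
theorem key1 (D : GeomRMatrixDatum A) (x' y' : A →ₗ[ℂ] ℂ) :
    ∑ i, ∑ k, (x' (D.a0 i) * y' (D.a0 k)) • ⁅D.a1 i, D.a1 k⁆
      = ∑ i, ∑ k, (x' ((D.a1 k) (D.a0 i)) * y' (D.a0 k)) • D.a1 i
      + ∑ i, ∑ l, (x' (D.b0 l) * y' ((D.b1 l) (D.a0 i))) • D.a1 i := by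
  have h := congrArg ((TensorProduct.rid ℂ (Derivation ℂ A A)).toLinearMap ∘ₗ
    LinearMap.lTensor _ (TensorProduct.lift (x'.smulRight y'))) D.E1
  simpa [map_sum, LinearMap.lTensor_tmul, TensorProduct.lift.tmul,
    LinearMap.smulRight_apply, TensorProduct.rid_tmul, smul_smul] using h

/-- Contraction of `E3` against two functionals on `A`. -/
theorem key3 (D : GeomRMatrixDatum A) (x' y' : A →ₗ[ℂ] ℂ) :
    ∑ i, ∑ l, (x' ((D.a1 i) (D.b0 l)) * y' (D.a0 i)) • D.b1 l
      + ∑ j, ∑ l, (x' (D.b0 j) * y' ((D.b1 j) (D.b0 l))) • D.b1 l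
      + ∑ j, ∑ l, (x' (D.b0 j) * y' (D.b0 l)) • ⁅D.b1 j, D.b1 l⁆ = 0 := by
  have h := congrArg (TensorProduct.lift (x'.smulRight
    (TensorProduct.lift (y'.smulRight (LinearMap.id (M := Derivation ℂ A A)))))) D.E3
  simpa [map_sum, TensorProduct.lift.tmul, LinearMap.smulRight_apply, smul_smul] using h

/-- Equation (3.1)/(3.2) of the paper: `Σ x(a⁰ᵢ)y(a⁰ₖ)[a¹ᵢ,a¹ₖ] = −Σ ((x⋆y)(a⁰ᵢ)+(x∘y)(a⁰ᵢ))·a¹ᵢ`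
and `Σ x(b⁰ⱼ)y(b⁰ₗ)[b¹ⱼ,b¹ₗ] = Σ ((x⋆y)(b⁰ⱼ)+(x∘y)(b⁰ⱼ))·b¹ⱼ` in `Der(A)`. -/
theorem bracket_identities_in_der (D : GeomRMatrixDatum A)
    (hA : ∀ i : Fin D.m, ∀ f ∈ D.V, D.a1 i f ∈ D.V)
    (hB : ∀ j : Fin D.n, ∀ f ∈ D.V, D.b1 j f ∈ D.V)
    (x y : Module.Dual ℂ D.V) :
    (∑ i, ∑ k, (x ⟨D.a0 i, D.a0_mem_V i⟩ * y ⟨D.a0 k, D.a0_mem_V k⟩) • ⁅D.a1 i, D.a1 k⁆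
      = - ∑ i, (starOp D hA x y ⟨D.a0 i, D.a0_mem_V i⟩
          + circOp D hB x y ⟨D.a0 i, D.a0_mem_V i⟩) • D.a1 i) ∧
    (∑ j, ∑ l, (x ⟨D.b0 j, D.b0_mem_V j⟩ * y ⟨D.b0 l, D.b0_mem_V l⟩) • ⁅D.b1 j, D.b1 l⁆
      = ∑ j, (starOp D hA x y ⟨D.b0 j, D.b0_mem_V j⟩
          + circOp D hB x y ⟨D.b0 j, D.b0_mem_V j⟩) • D.b1 j) := by
  obtain ⟨x', hx'⟩ := LinearMap.exists_extend x
  obtain ⟨y', hy'⟩ := LinearMap.exists_extend y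
  have hx : ∀ v (hv : v ∈ D.V), x' v = x ⟨v, hv⟩ := fun v hv => LinearMap.congr_fun hx' ⟨v, hv⟩
  have hy : ∀ v (hv : v ∈ D.V), y' v = y ⟨v, hv⟩ := fun v hv => LinearMap.congr_fun hy' ⟨v, hv⟩
  have hstar : ∀ f (hf : f ∈ D.V),
      starOp D hA x y ⟨f, hf⟩ = ∑ i, x' (D.a0 i) * y' ((D.a1 i) f) := by
    intro f hf
    simp only [starOp, LinearMap.sum_apply, LinearMap.smul_apply, LinearMap.comp_apply,
      LinearMap.restrict_apply, smul_eq_mul]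
    refine Finset.sum_congr rfl fun i _ => ?_
    rw [hx _ (D.a0_mem_V i), hy _ (hA i f hf)]
    rfl
  have hcirc : ∀ f (hf : f ∈ D.V),
      circOp D hB x y ⟨f, hf⟩ = ∑ j, y' (D.b0 j) * x' ((D.b1 j) f) := by
    intro f hf
    simp only [circOp, LinearMap.sum_apply, LinearMap.smul_apply, LinearMap.comp_apply,
      LinearMap.restrict_apply, smul_eq_mul]
    refine Finset.sum_congr rfl fun j _ => ?_
    rw [hy _ (D.b0_mem_V j), hx _ (hB j f hf)]
    rfl
  have hLa : ∑ i, ∑ k, (x ⟨D.a0 i, D.a0_mem_V i⟩ * y ⟨D.a0 k, D.a0_mem_V k⟩) • ⁅D.a1 i, D.a1 k⁆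
      = ∑ i, ∑ k, (x' (D.a0 i) * y' (D.a0 k)) • ⁅D.a1 i, D.a1 k⁆ :=
    Finset.sum_congr rfl fun i _ => Finset.sum_congr rfl fun k _ => by
      rw [hx _ (D.a0_mem_V i), hy _ (D.a0_mem_V k)]
  have hLb : ∑ j, ∑ l, (x ⟨D.b0 j, D.b0_mem_V j⟩ * y ⟨D.b0 l, D.b0_mem_V l⟩) • ⁅D.b1 j, D.b1 l⁆
      = ∑ j, ∑ l, (x' (D.b0 j) * y' (D.b0 l)) • ⁅D.b1 j, D.b1 l⁆ :=
    Finset.sum_congr rfl fun j _ => Finset.sum_congr rfl fun l _ => by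
      rw [hx _ (D.b0_mem_V j), hy _ (D.b0_mem_V l)]
  constructor
  · have h := key1 D y' x'
    have hswap : ∑ i, ∑ k, (y' (D.a0 i) * x' (D.a0 k)) • ⁅D.a1 i, D.a1 k⁆
        = - ∑ i, ∑ k, (x' (D.a0 i) * y' (D.a0 k)) • ⁅D.a1 i, D.a1 k⁆ := by
      rw [Finset.sum_comm, ← Finset.sum_neg_distrib]
      refine Finset.sum_congr rfl fun i _ => ?_
      rw [← Finset.sum_neg_distrib]
      refine Finset.sum_congr rfl fun k _ => ?_
      rw [mul_comm, ← lie_skew, smul_neg]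
    rw [hswap, neg_eq_iff_eq_neg] at h
    rw [hLa, h]
    congr 1
    have e : ∀ i, (starOp D hA x y ⟨D.a0 i, D.a0_mem_V i⟩
        + circOp D hB x y ⟨D.a0 i, D.a0_mem_V i⟩) • D.a1 i
        = ∑ k, (y' ((D.a1 k) (D.a0 i)) * x' (D.a0 k)) • D.a1 i
        + ∑ l, (y' (D.b0 l) * x' ((D.b1 l) (D.a0 i))) • D.a1 i := by
      intro i
      rw [hstar _ (D.a0_mem_V i), hcirc _ (D.a0_mem_V i), add_smul,
        Finset.sum_smul, Finset.sum_smul]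
      congr 1
      exact Finset.sum_congr rfl fun k _ => by rw [mul_comm]
    simp only [e, Finset.sum_add_distrib]
  · have h := key3 D y' x'
    have hswap : ∑ j, ∑ l, (y' (D.b0 j) * x' (D.b0 l)) • ⁅D.b1 j, D.b1 l⁆
        = - ∑ j, ∑ l, (x' (D.b0 j) * y' (D.b0 l)) • ⁅D.b1 j, D.b1 l⁆ := by
      rw [Finset.sum_comm, ← Finset.sum_neg_distrib]
      refine Finset.sum_congr rfl fun j _ => ?_
      rw [← Finset.sum_neg_distrib]
      refine Finset.sum_congr rfl fun l _ => ?_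
      rw [mul_comm, ← lie_skew, smul_neg]
    rw [hswap, add_neg_eq_zero] at h
    rw [hLb, ← h]
    have e : ∀ l, (starOp D hA x y ⟨D.b0 l, D.b0_mem_V l⟩
        + circOp D hB x y ⟨D.b0 l, D.b0_mem_V l⟩) • D.b1 l
        = ∑ i, (y' ((D.a1 i) (D.b0 l)) * x' (D.a0 i)) • D.b1 l
        + ∑ j, (y' (D.b0 j) * x' ((D.b1 j) (D.b0 l))) • D.b1 l := by
      intro l
      rw [hstar _ (D.b0_mem_V l), hcirc _ (D.b0_mem_V l), add_smul,
        Finset.sum_smul, Finset.sum_smul]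
      congr 1
      exact Finset.sum_congr rfl fun i _ => by rw [mul_comm]
    simp only [e, Finset.sum_add_distrib]
    congr 1
    · exact Finset.sum_comm
    · exact Finset.sum_comm
end

section
/- Given a geometric classical r-matrix datum on A with V invariant under every a¹ᵢ and b¹ⱼ, for all x,y,z ∈ V* the following identity holds in V*: ((z⋆y)∘x) − (z⋆(y∘x)) − ((z∘x)⋆y) + (y∘(z⋆x)) = 0. -/
open TensorProduct

set_option synthInstance.maxHeartbeats 1000000
set_option maxHeartbeats 1000000

variable {A : Type*} [CommRing A] [Algebra ℂ A]

noncomputable def evalD (f : A) : Derivation ℂ A A →ₗ[ℂ] A where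
  toFun d := d f
  map_add' d e := rfl
  map_smul' c d := rfl

theorem key (D : GeomRMatrixDatum A) (X Y Z : A →ₗ[ℂ] ℂ) (f : A) :
    ∑ j, ∑ k, X ((D.a1 k) (D.b0 j)) * (Y ((D.b1 j) f) * Z (D.a0 k))
      = ∑ j, ∑ k, X (D.b0 j) * (Y (⁅D.b1 j, D.a1 k⁆ f) * Z (D.a0 k))
      + ∑ j, ∑ k, X (D.b0 j) * (Y ((D.a1 k) f) * Z ((D.b1 j) (D.a0 k))) := by
  have h := congrArg (TensorProduct.lift (X.smulRight
      (TensorProduct.lift ((Y.comp (evalD f)).smulRight Z)))) D.E2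
  simpa [evalD, smul_eq_mul] using h
/-- The mixed associativity identity `((z⋆y)∘x) − (z⋆(y∘x)) − ((z∘x)⋆y) + (y∘(z⋆x)) = 0`. -/
theorem star_circ_mixed_identity (D : GeomRMatrixDatum A)
    (hA : ∀ i : Fin D.m, ∀ f ∈ D.V, D.a1 i f ∈ D.V)
    (hB : ∀ j : Fin D.n, ∀ f ∈ D.V, D.b1 j f ∈ D.V)
    (x y z : Module.Dual ℂ D.V) :
    circOp D hB (starOp D hA z y) x - starOp D hA z (circOp D hB y x)
      - starOp D hA (circOp D hB z x) y + circOp D hB y (starOp D hA z x) = 0 := by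
  obtain ⟨X, hX⟩ := LinearMap.exists_extend x
  obtain ⟨Y, hY⟩ := LinearMap.exists_extend y
  obtain ⟨Z, hZ⟩ := LinearMap.exists_extend z
  have hx : ∀ v : D.V, x v = X ↑v := fun v => by rw [← hX]; rfl
  have hy : ∀ v : D.V, y v = Y ↑v := fun v => by rw [← hY]; rfl
  have hz : ∀ v : D.V, z v = Z ↑v := fun v => by rw [← hZ]; rfl
  ext f
  have L := key D X Y Z (f : A)
  simp only [Derivation.commutator_apply, map_sub, mul_sub, sub_mul,
    Finset.sum_sub_distrib] at L
  simp only [circOp, starOp, LinearMap.sum_apply, LinearMap.smul_apply, smul_eq_mul,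
    LinearMap.coe_comp, Function.comp_apply, LinearMap.restrict_apply,
    Derivation.coeFn_coe, hx, hy, hz, LinearMap.add_apply, LinearMap.sub_apply,
    LinearMap.zero_apply, Submodule.coe_mk]
  have e1 : ∑ j, X (D.b0 j) * ∑ k, Z (D.a0 k) * Y ((D.a1 k) ((D.b1 j) (f : A)))
      = ∑ j, ∑ k, X (D.b0 j) * (Y ((D.a1 k) ((D.b1 j) (f : A))) * Z (D.a0 k)) := by
    simp only [Finset.mul_sum]
    exact Finset.sum_congr rfl fun j _ => Finset.sum_congr rfl fun k _ => by ring
  have e2 : ∑ k, Z (D.a0 k) * ∑ j, X (D.b0 j) * Y ((D.b1 j) ((D.a1 k) (f : A)))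
      = ∑ j, ∑ k, X (D.b0 j) * (Y ((D.b1 j) ((D.a1 k) (f : A))) * Z (D.a0 k)) := by
    simp only [Finset.mul_sum]
    rw [Finset.sum_comm]
    exact Finset.sum_congr rfl fun j _ => Finset.sum_congr rfl fun k _ => by ring
  have e3 : ∑ k, (∑ j, X (D.b0 j) * Z ((D.b1 j) (D.a0 k))) * Y ((D.a1 k) (f : A))
      = ∑ j, ∑ k, X (D.b0 j) * (Y ((D.a1 k) (f : A)) * Z ((D.b1 j) (D.a0 k))) := by
    simp only [Finset.sum_mul]
    rw [Finset.sum_comm]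
    exact Finset.sum_congr rfl fun j _ => Finset.sum_congr rfl fun k _ => by ring
  have e4 : ∑ j, (∑ k, Z (D.a0 k) * X ((D.a1 k) (D.b0 j))) * Y ((D.b1 j) (f : A))
      = ∑ j, ∑ k, X ((D.a1 k) (D.b0 j)) * (Y ((D.b1 j) (f : A)) * Z (D.a0 k)) := by
    simp only [Finset.sum_mul]
    exact Finset.sum_congr rfl fun j _ => Finset.sum_congr rfl fun k _ => by ring
  rw [e1, e2, e3, e4]
  linear_combination L
end

section
/- Let 𝔤 and 𝔞 be finite-dimensional Lie algebras over ℂ, θ: 𝔤 → Der(𝔞) a Lie algebra homomorphism, 𝔞⋊𝔤 the semidirect product Lie algebra, π: 𝔤 → 𝔞 a bijective 1-cocycle, A a commutative ℂ-algebra, ρ: 𝔞⋊𝔤 → Der(A) a Lie algebra homomorphism, and u: 𝔞* → A a ℂ-linear map satisfying ρ(v)(u(ξ)) = −u(ξ∘ad_v) for all v ∈ 𝔞⋊𝔤 and ξ ∈ 𝔞*. Fix a basis (v₁,…,v_d) of 𝔞 with dual basis (v¹,…,v^d), and set a¹ₘ := −ρ(0, π⁻¹(vₘ)) ∈ Der(A),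 a⁰ₘ := u(v^m) ∈ A, b⁰ₘ := u(v^m) ∈ A, b¹ₘ := ρ(vₘ, π⁻¹(vₘ)) ∈ Der(A) for m = 1,…,d. Then these families satisfy the three component classical Yang–Baxter equations (all tensor products over ℂ, sums over all repeated indices from 1 to d): (E1) Σ[a¹ᵢ,a¹ₖ]⊗a⁰ᵢ⊗a⁰ₖ = Σ a¹ᵢ⊗(a¹ₖ a⁰ᵢ)⊗a⁰ₖ + Σ a¹ᵢ⊗b⁰ₗ⊗(b¹ₗ a⁰ᵢ) in Der(A)⊗A⊗A; (E2) Σ(a¹ₖ b⁰ⱼ)⊗b¹ⱼ⊗a⁰ₖ = Σ b⁰ⱼ⊗[b¹ⱼ,a¹ₖ]⊗a⁰ₖ + Σ b⁰ⱼ⊗a¹ₖ⊗(b¹ⱼ a⁰ₖ) in A⊗Der(A)⊗A; (E3) Σ(a¹ᵢ b⁰ₗ)⊗a⁰ᵢ⊗b¹ₗ + Σ b⁰ⱼ⊗(b¹ⱼ b⁰ₗ)⊗b¹ₗ + Σ b⁰ⱼ⊗b⁰ₗ⊗[b¹ⱼ,b¹ₗ] = 0 in A⊗A⊗Der(A). 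-/
open TensorProduct

set_option synthInstance.maxHeartbeats 1000000
set_option maxHeartbeats 1000000
section helpers
variable {ι M : Type*} [Fintype ι] [AddCommMonoid M]

lemma sum3_perm_213 (f : ι → ι → ι → M) :
    ∑ i, ∑ k, ∑ m, f i k m = ∑ i, ∑ k, ∑ m, f k i m := Finset.sum_comm

lemma sum3_perm_132 (f : ι → ι → ι → M) :
    ∑ i, ∑ k, ∑ m, f i k m = ∑ i, ∑ k, ∑ m, f i m k :=
  Finset.sum_congr rfl fun _ _ => Finset.sum_comm

lemma sum3_perm_312 (f : ι → ι → ι → M) :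
    ∑ i, ∑ k, ∑ m, f i k m = ∑ i, ∑ k, ∑ m, f m i k := by
  rw [sum3_perm_213 f, sum3_perm_132 (fun i k m => f k i m)]

lemma sum3_perm_231 (f : ι → ι → ι → M) :
    ∑ i, ∑ k, ∑ m, f i k m = ∑ i, ∑ k, ∑ m, f k m i := by
  rw [sum3_perm_132 f, sum3_perm_213 (fun i k m => f i m k)]

lemma sum3_perm_321 (f : ι → ι → ι → M) :
    ∑ i, ∑ k, ∑ m, f i k m = ∑ i, ∑ k, ∑ m, f m k i := by
  rw [sum3_perm_213 f, sum3_perm_132 (fun i k m => f k i m),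
    sum3_perm_213 (fun i k m => f m i k)]

end helpers

section expand
variable {a : Type*} [AddCommGroup a] [Module ℂ a] {d : ℕ} (bas : Module.Basis (Fin d) ℂ a)

lemma expand_lin {M : Type*} [AddCommMonoid M] [Module ℂ M] (f : a →ₗ[ℂ] M) (w : a) :
    f w = ∑ m, bas.coord m w • f (bas m) := by
  conv_lhs => rw [← bas.sum_repr w]
  rw [map_sum]
  exact Finset.sum_congr rfl fun m _ => by rw [map_smul]; rfl

lemma expand_dual (ξ : Module.Dual ℂ a) : ξ = ∑ m, ξ (bas m) • bas.coord m :=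
  (Module.Basis.sum_dual_apply_smul_coord bas ξ).symm

end expand

/-- From a classical bijective cocycle 7-tuple `(𝔤, 𝔞, θ, π, ρ, u)` one obtains a
geometric solution of the classical Yang–Baxter equation: the families
`a¹ₘ = −ρ(0, π⁻¹(vₘ))`, `a⁰ₘ = b⁰ₘ = u(vᵐ)`, `b¹ₘ = ρ(vₘ, π⁻¹(vₘ))` satisfy the three
component classical Yang–Baxter equations (E1)–(E3). -/
theorem cbcst_gives_cybe
    {g a : Type*} [LieRing g] [LieAlgebra ℂ g] [LieRing a] [LieAlgebra ℂ a]
    [FiniteDimensional ℂ g] [FiniteDimensional ℂ a]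
    {A : Type*} [CommRing A] [Algebra ℂ A]
    (θ : g →ₗ⁅ℂ⁆ LieDerivation ℂ a a)
    (π : g ≃ₗ[ℂ] a)
    (hπ : ∀ x y : g, π ⁅x, y⁆ = θ x (π y) - θ y (π x) + ⁅π x, π y⁆)
    (ρ : (a × g) →ₗ[ℂ] Derivation ℂ A A)
    (hρ : ∀ p q : a × g,
      ρ (θ p.2 q.1 - θ q.2 p.1 + ⁅p.1, q.1⁆, ⁅p.2, q.2⁆) = ⁅ρ p, ρ q⁆)
    (u : Module.Dual ℂ a →ₗ[ℂ] A)
    (hu : ∀ (v : a × g) (ξ : Module.Dual ℂ a),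
      ρ v (u ξ) = - u (ξ ∘ₗ ((θ v.2).toLinearMap + (LieAlgebra.ad ℂ a v.1))))
    (d : ℕ) (bas : Module.Basis (Fin d) ℂ a)
    (a1 : Fin d → Derivation ℂ A A) (ha1 : ∀ m, a1 m = - ρ (0, π.symm (bas m)))
    (a0 : Fin d → A) (ha0 : ∀ m, a0 m = u (bas.coord m))
    (b0 : Fin d → A) (hb0 : ∀ m, b0 m = u (bas.coord m))
    (b1 : Fin d → Derivation ℂ A A)
    (hb1 : ∀ m, b1 m = ρ (bas m, π.symm (bas m))) :
    (∑ i, ∑ k, (⁅a1 i, a1 k⁆ ⊗ₜ[ℂ] (a0 i ⊗ₜ[ℂ] a0 k))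
        = ∑ i, ∑ k, (a1 i ⊗ₜ[ℂ] ((a1 k) (a0 i) ⊗ₜ[ℂ] a0 k))
        + ∑ i, ∑ l, (a1 i ⊗ₜ[ℂ] (b0 l ⊗ₜ[ℂ] (b1 l) (a0 i)))) ∧
    (∑ j, ∑ k, ((a1 k) (b0 j) ⊗ₜ[ℂ] (b1 j ⊗ₜ[ℂ] a0 k))
        = ∑ j, ∑ k, (b0 j ⊗ₜ[ℂ] (⁅b1 j, a1 k⁆ ⊗ₜ[ℂ] a0 k))
        + ∑ j, ∑ k, (b0 j ⊗ₜ[ℂ] (a1 k ⊗ₜ[ℂ] (b1 j) (a0 k)))) ∧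
    (∑ i, ∑ l, ((a1 i) (b0 l) ⊗ₜ[ℂ] (a0 i ⊗ₜ[ℂ] b1 l))
        + ∑ j, ∑ l, (b0 j ⊗ₜ[ℂ] ((b1 j) (b0 l) ⊗ₜ[ℂ] b1 l))
        + ∑ j, ∑ l, (b0 j ⊗ₜ[ℂ] (b0 l ⊗ₜ[ℂ] ⁅b1 j, b1 l⁆)) = 0) := by
  classical
  -- reduced-projection versions of the hypotheses
  have hρ' : ∀ (x y : a) (w z : g),
      ρ (θ w y - θ z x + ⁅x, y⁆, ⁅w, z⁆) = ⁅ρ (x, w), ρ (y, z)⁆ :=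
    fun x y w z => hρ (x, w) (y, z)
  have hu' : ∀ (x : a) (w : g) (ξ : Module.Dual ℂ a),
      ρ (x, w) (u ξ) = - u (ξ ∘ₗ ((θ w).toLinearMap + (LieAlgebra.ad ℂ a x))) :=
    fun x w ξ => hu (x, w) ξ
  have hba : ∀ m, b0 m = a0 m := fun m => by rw [hb0, ha0]
  have hneg : ∀ m, ρ ((0 : a), π.symm (bas m)) = -(a1 m) := fun m => by
    rw [ha1 m, neg_neg]
  have hbasd : ∀ m, ρ (bas m, π.symm (bas m)) = b1 m := fun m => (hb1 m).symm
  -- expansions along the basis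
  have E_inr : ∀ w : a, ρ (0, π.symm w)
      = ∑ m, bas.coord m w • ρ (0, π.symm (bas m)) := by
    intro w
    have h := expand_lin bas (ρ.comp ((LinearMap.inr ℂ a g).comp π.symm.toLinearMap)) w
    simpa using h
  have E_inl : ∀ w : a, ρ (w, 0)
      = ∑ m, bas.coord m w • ρ (bas m, 0) := by
    intro w
    have h := expand_lin bas (ρ.comp (LinearMap.inl ℂ a g)) w
    simpa using h
  have E_diag : ∀ w : a, ρ (w, π.symm w)
      = ∑ m, bas.coord m w • ρ (bas m, π.symm (bas m)) := by
    intro w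
    have h := expand_lin bas (ρ.comp (LinearMap.prod LinearMap.id π.symm.toLinearMap)) w
    simpa using h
  have E_u : ∀ ξ : Module.Dual ℂ a, u ξ = ∑ m, ξ (bas m) • a0 m := by
    intro ξ
    conv_lhs => rw [expand_dual bas ξ]
    rw [map_sum]
    exact Finset.sum_congr rfl fun m _ => by rw [map_smul, ← ha0 m]
  have hbas1 : ∀ m, ρ (bas m, (0 : g)) = b1 m + a1 m := by
    intro m
    have h : ((bas m, (0 : g)) : a × g)
        = (bas m, π.symm (bas m)) - ((0 : a), π.symm (bas m)) := by
      simp [Prod.ext_iff]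
    rw [h, map_sub, hbasd m, hneg m, sub_neg_eq_add]
  have hbr : ∀ i k, (⁅π.symm (bas i), π.symm (bas k)⁆ : g)
      = π.symm (θ (π.symm (bas i)) (bas k) - θ (π.symm (bas k)) (bas i)
          + ⁅bas i, bas k⁆) := by
    intro i k
    rw [LinearEquiv.eq_symm_apply, hπ]
    simp
  -- F-lemmas
  have F1 : ∀ i k, ⁅a1 i, a1 k⁆
      = ∑ m, (bas.coord m (θ (π.symm (bas k)) (bas i))
          - bas.coord m (θ (π.symm (bas i)) (bas k))
          - bas.coord m ⁅bas i, bas k⁆) • a1 m := by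
    intro i k
    have h1 : ⁅a1 i, a1 k⁆ = ρ (0, ⁅π.symm (bas i), π.symm (bas k)⁆) := by
      rw [ha1 i, ha1 k, neg_lie, lie_neg, neg_neg,
        ← hρ' 0 0 (π.symm (bas i)) (π.symm (bas k))]
      congr 1
      simp [Prod.ext_iff]
    rw [h1, hbr i k, E_inr]
    refine Finset.sum_congr rfl fun m _ => ?_
    rw [hneg m]; simp only [map_sub, map_add]
    module
  have F2 : ∀ i k, (a1 k) (a0 i)
      = ∑ m, bas.coord i (θ (π.symm (bas k)) (bas m)) • a0 m := by
    intro i k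
    have h1 : (a1 k) (a0 i) = -(ρ ((0 : a), π.symm (bas k)) (u (bas.coord i))) := by
      rw [ha1 k, ha0 i]; rfl
    rw [h1, hu' 0 (π.symm (bas k)) (bas.coord i), neg_neg, E_u]
    refine Finset.sum_congr rfl fun m _ => ?_
    congr 1
    simp
  have F3 : ∀ l i, (b1 l) (a0 i)
      = ∑ m, (-(bas.coord i (θ (π.symm (bas l)) (bas m))
          + bas.coord i ⁅bas l, bas m⁆)) • a0 m := by
    intro l i
    rw [hb1 l, ha0 i, hu' (bas l) (π.symm (bas l)) (bas.coord i), E_u,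
      ← Finset.sum_neg_distrib]
    refine Finset.sum_congr rfl fun m _ => ?_
    rw [← neg_smul]
    congr 1
    simp
  have F4 : ∀ j k, ⁅b1 j, a1 k⁆
      = ∑ m, (bas.coord m (θ (π.symm (bas k)) (bas j)) • b1 m
          + (bas.coord m (θ (π.symm (bas j)) (bas k))
              + bas.coord m ⁅bas j, bas k⁆) • a1 m) := by
    intro j k
    have h1 : ⁅b1 j, a1 k⁆ = ρ (θ (π.symm (bas k)) (bas j), 0)
        - ρ (0, ⁅π.symm (bas j), π.symm (bas k)⁆) := by
      rw [hb1 j, ha1 k, lie_neg,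
        ← hρ' (bas j) 0 (π.symm (bas j)) (π.symm (bas k)), ← map_sub, ← map_neg]
      congr 1
      simp [Prod.ext_iff]
    rw [h1, E_inl, hbr j k, E_inr, ← Finset.sum_sub_distrib]
    refine Finset.sum_congr rfl fun m _ => ?_
    rw [hbas1 m, hneg m]; simp only [map_sub, map_add]
    module
  have F7 : ∀ j l, ⁅b1 j, b1 l⁆
      = ∑ m, (bas.coord m (θ (π.symm (bas j)) (bas l))
          - bas.coord m (θ (π.symm (bas l)) (bas j))
          + bas.coord m ⁅bas j, bas l⁆) • b1 m := by
    intro j l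
    rw [hb1 j, hb1 l, ← hρ' (bas j) (bas l) (π.symm (bas j)) (π.symm (bas l)),
      hbr j l, E_diag]
    refine Finset.sum_congr rfl fun m _ => ?_
    rw [hbasd m]; simp only [map_sub, map_add, sub_smul, add_smul]
  refine ⟨?_, ?_, ?_⟩
  · -- E1
    have hL : ∑ i, ∑ k, (⁅a1 i, a1 k⁆ ⊗ₜ[ℂ] (a0 i ⊗ₜ[ℂ] a0 k))
        = ∑ i, ∑ k, ∑ m, (bas.coord m (θ (π.symm (bas k)) (bas i))
            - bas.coord m (θ (π.symm (bas i)) (bas k))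
            - bas.coord m ⁅bas i, bas k⁆) • (a1 m ⊗ₜ[ℂ] (a0 i ⊗ₜ[ℂ] a0 k)) := by
      simp_rw [F1, TensorProduct.sum_tmul, ← TensorProduct.smul_tmul']
    have hR1 : ∑ i, ∑ k, (a1 i ⊗ₜ[ℂ] ((a1 k) (a0 i) ⊗ₜ[ℂ] a0 k))
        = ∑ i, ∑ k, ∑ m, bas.coord m (θ (π.symm (bas k)) (bas i)) •
            (a1 m ⊗ₜ[ℂ] (a0 i ⊗ₜ[ℂ] a0 k)) := by
      calc ∑ i, ∑ k, (a1 i ⊗ₜ[ℂ] ((a1 k) (a0 i) ⊗ₜ[ℂ] a0 k))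
          = ∑ i, ∑ k, ∑ m, bas.coord i (θ (π.symm (bas k)) (bas m)) •
              (a1 i ⊗ₜ[ℂ] (a0 m ⊗ₜ[ℂ] a0 k)) := by
            simp_rw [F2, TensorProduct.sum_tmul, ← TensorProduct.smul_tmul',
              TensorProduct.tmul_sum, TensorProduct.tmul_smul]
        _ = _ := sum3_perm_321 fun i k m => bas.coord i (θ (π.symm (bas k)) (bas m)) •
              (a1 i ⊗ₜ[ℂ] (a0 m ⊗ₜ[ℂ] a0 k))
    have hR2 : ∑ i, ∑ l, (a1 i ⊗ₜ[ℂ] (b0 l ⊗ₜ[ℂ] (b1 l) (a0 i)))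
        = ∑ i, ∑ k, ∑ m, (-(bas.coord m (θ (π.symm (bas i)) (bas k))
            + bas.coord m ⁅bas i, bas k⁆)) • (a1 m ⊗ₜ[ℂ] (a0 i ⊗ₜ[ℂ] a0 k)) := by
      calc ∑ i, ∑ l, (a1 i ⊗ₜ[ℂ] (b0 l ⊗ₜ[ℂ] (b1 l) (a0 i)))
          = ∑ i, ∑ l, ∑ m, (-(bas.coord i (θ (π.symm (bas l)) (bas m))
              + bas.coord i ⁅bas l, bas m⁆)) • (a1 i ⊗ₜ[ℂ] (a0 l ⊗ₜ[ℂ] a0 m)) := by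
            simp_rw [F3, hba, TensorProduct.tmul_sum, TensorProduct.tmul_smul]
        _ = _ := sum3_perm_312 fun i l m => (-(bas.coord i (θ (π.symm (bas l)) (bas m))
              + bas.coord i ⁅bas l, bas m⁆)) • (a1 i ⊗ₜ[ℂ] (a0 l ⊗ₜ[ℂ] a0 m))
    rw [hL, hR1, hR2, ← Finset.sum_add_distrib]
    refine Finset.sum_congr rfl fun i _ => ?_
    rw [← Finset.sum_add_distrib]
    refine Finset.sum_congr rfl fun k _ => ?_
    rw [← Finset.sum_add_distrib]
    refine Finset.sum_congr rfl fun m _ => ?_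
    module
  · -- E2
    have hL : ∑ j, ∑ k, ((a1 k) (b0 j) ⊗ₜ[ℂ] (b1 j ⊗ₜ[ℂ] a0 k))
        = ∑ j, ∑ k, ∑ m, bas.coord m (θ (π.symm (bas k)) (bas j)) •
            (a0 j ⊗ₜ[ℂ] (b1 m ⊗ₜ[ℂ] a0 k)) := by
      calc ∑ j, ∑ k, ((a1 k) (b0 j) ⊗ₜ[ℂ] (b1 j ⊗ₜ[ℂ] a0 k))
          = ∑ j, ∑ k, ∑ m, bas.coord j (θ (π.symm (bas k)) (bas m)) •
              (a0 m ⊗ₜ[ℂ] (b1 j ⊗ₜ[ℂ] a0 k)) := by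
            simp_rw [hba, F2, TensorProduct.sum_tmul, ← TensorProduct.smul_tmul']
        _ = _ := sum3_perm_321 fun j k m => bas.coord j (θ (π.symm (bas k)) (bas m)) •
              (a0 m ⊗ₜ[ℂ] (b1 j ⊗ₜ[ℂ] a0 k))
    have hR1 : ∑ j, ∑ k, (b0 j ⊗ₜ[ℂ] (⁅b1 j, a1 k⁆ ⊗ₜ[ℂ] a0 k))
        = ∑ j, ∑ k, ∑ m, (bas.coord m (θ (π.symm (bas k)) (bas j)) •
              (a0 j ⊗ₜ[ℂ] (b1 m ⊗ₜ[ℂ] a0 k))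
            + (bas.coord m (θ (π.symm (bas j)) (bas k))
                + bas.coord m ⁅bas j, bas k⁆) •
              (a0 j ⊗ₜ[ℂ] (a1 m ⊗ₜ[ℂ] a0 k))) := by
      simp_rw [hba, F4, TensorProduct.sum_tmul, TensorProduct.add_tmul,
        ← TensorProduct.smul_tmul', TensorProduct.tmul_sum, TensorProduct.tmul_add,
        TensorProduct.tmul_smul]
    have hR2 : ∑ j, ∑ k, (b0 j ⊗ₜ[ℂ] (a1 k ⊗ₜ[ℂ] (b1 j) (a0 k)))
        = ∑ j, ∑ k, ∑ m, (-(bas.coord m (θ (π.symm (bas j)) (bas k))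
            + bas.coord m ⁅bas j, bas k⁆)) • (a0 j ⊗ₜ[ℂ] (a1 m ⊗ₜ[ℂ] a0 k)) := by
      calc ∑ j, ∑ k, (b0 j ⊗ₜ[ℂ] (a1 k ⊗ₜ[ℂ] (b1 j) (a0 k)))
          = ∑ j, ∑ k, ∑ m, (-(bas.coord k (θ (π.symm (bas j)) (bas m))
              + bas.coord k ⁅bas j, bas m⁆)) • (a0 j ⊗ₜ[ℂ] (a1 k ⊗ₜ[ℂ] a0 m)) := by
            simp_rw [hba, F3, TensorProduct.tmul_sum, TensorProduct.tmul_smul]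
        _ = _ := sum3_perm_132 fun j k m => (-(bas.coord k (θ (π.symm (bas j)) (bas m))
              + bas.coord k ⁅bas j, bas m⁆)) • (a0 j ⊗ₜ[ℂ] (a1 k ⊗ₜ[ℂ] a0 m))
    rw [hL, hR1, hR2, ← Finset.sum_add_distrib]
    refine Finset.sum_congr rfl fun j _ => ?_
    rw [← Finset.sum_add_distrib]
    refine Finset.sum_congr rfl fun k _ => ?_
    rw [← Finset.sum_add_distrib]
    refine Finset.sum_congr rfl fun m _ => ?_
    module
  · -- E3
    have hT1 : ∑ i, ∑ l, ((a1 i) (b0 l) ⊗ₜ[ℂ] (a0 i ⊗ₜ[ℂ] b1 l))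
        = ∑ x, ∑ y, ∑ z, bas.coord z (θ (π.symm (bas y)) (bas x)) •
            (a0 x ⊗ₜ[ℂ] (a0 y ⊗ₜ[ℂ] b1 z)) := by
      calc ∑ i, ∑ l, ((a1 i) (b0 l) ⊗ₜ[ℂ] (a0 i ⊗ₜ[ℂ] b1 l))
          = ∑ i, ∑ l, ∑ m, bas.coord l (θ (π.symm (bas i)) (bas m)) •
              (a0 m ⊗ₜ[ℂ] (a0 i ⊗ₜ[ℂ] b1 l)) := by
            simp_rw [hba, F2, TensorProduct.sum_tmul, ← TensorProduct.smul_tmul']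
        _ = _ := sum3_perm_231 fun i l m => bas.coord l (θ (π.symm (bas i)) (bas m)) •
              (a0 m ⊗ₜ[ℂ] (a0 i ⊗ₜ[ℂ] b1 l))
    have hT2 : ∑ j, ∑ l, (b0 j ⊗ₜ[ℂ] ((b1 j) (b0 l) ⊗ₜ[ℂ] b1 l))
        = ∑ x, ∑ y, ∑ z, (-(bas.coord z (θ (π.symm (bas x)) (bas y))
            + bas.coord z ⁅bas x, bas y⁆)) • (a0 x ⊗ₜ[ℂ] (a0 y ⊗ₜ[ℂ] b1 z)) := by
      calc ∑ j, ∑ l, (b0 j ⊗ₜ[ℂ] ((b1 j) (b0 l) ⊗ₜ[ℂ] b1 l))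
          = ∑ j, ∑ l, ∑ m, (-(bas.coord l (θ (π.symm (bas j)) (bas m))
              + bas.coord l ⁅bas j, bas m⁆)) • (a0 j ⊗ₜ[ℂ] (a0 m ⊗ₜ[ℂ] b1 l)) := by
            simp_rw [hba, F3, TensorProduct.sum_tmul, ← TensorProduct.smul_tmul',
              TensorProduct.tmul_sum, TensorProduct.tmul_smul]
        _ = _ := sum3_perm_132 fun j l m => (-(bas.coord l (θ (π.symm (bas j)) (bas m))
              + bas.coord l ⁅bas j, bas m⁆)) • (a0 j ⊗ₜ[ℂ] (a0 m ⊗ₜ[ℂ] b1 l))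
    have hT3 : ∑ j, ∑ l, (b0 j ⊗ₜ[ℂ] (b0 l ⊗ₜ[ℂ] ⁅b1 j, b1 l⁆))
        = ∑ x, ∑ y, ∑ z, (bas.coord z (θ (π.symm (bas x)) (bas y))
            - bas.coord z (θ (π.symm (bas y)) (bas x))
            + bas.coord z ⁅bas x, bas y⁆) • (a0 x ⊗ₜ[ℂ] (a0 y ⊗ₜ[ℂ] b1 z)) := by
      simp_rw [hba, F7, TensorProduct.tmul_sum, TensorProduct.tmul_smul]
    rw [hT1, hT2, hT3, ← Finset.sum_add_distrib, ← Finset.sum_add_distrib]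
    refine Finset.sum_eq_zero fun x _ => ?_
    rw [← Finset.sum_add_distrib, ← Finset.sum_add_distrib]
    refine Finset.sum_eq_zero fun y _ => ?_
    rw [← Finset.sum_add_distrib, ← Finset.sum_add_distrib]
    refine Finset.sum_eq_zero fun z _ => ?_
    module
end

section
/- Let 𝔥 be the Heisenberg Lie algebra over ℂ with basis X, Y, C and brackets [X,Y] = C, [X,C] = [Y,C] = 0, and let 𝔱 be the Lie algebra of upper triangular 2×2 complex matrices. Define the ℂ-linear map ρ: 𝔱 → End(𝔥) by: for g = [[p,q],[0,r]], ρ(g)(X) = pX, ρ(g)(Y) = qX + rY, ρ(g)(C) = (p+r)C; and define π: 𝔱 → 𝔥 by π([[p,q],[0,r]]) = qX + rY + (p + q/2 + r)C. Then: (i) for every g ∈ 𝔱, ρ(g) is a derivation of 𝔥, and ρ: 𝔱 → Der(𝔥) is a Lie algebra homomorphism; (ii) π is a ℂ-linear bijection; (iii) π([g,h]) = ρ(g)(π(h)) − ρ(h)(π(g)) + [π(g),π(h)] for all g,h ∈ 𝔱, i.e., π is a bijective 1-cocycle. -/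
attribute [local instance 100] LieRing.ofAssociativeRing

/-- The Lie subalgebra of upper triangular `2×2` complex matrices. -/
def upperTriangular2 : LieSubalgebra ℂ (Matrix (Fin 2) (Fin 2) ℂ) where
  carrier := {M | M 1 0 = 0}
  add_mem' := by
    intro a b ha hb
    simp only [Set.mem_setOf_eq, Matrix.add_apply] at *
    simp [ha, hb]
  zero_mem' := by simp
  smul_mem' := by
    intro c a ha
    simp only [Set.mem_setOf_eq, Matrix.smul_apply] at *
    simp [ha]
  lie_mem' := by
    intro a b ha hb
    simp only [Set.mem_setOf_eq] at *
    simp [Ring.lie_def, Matrix.sub_apply, Matrix.mul_apply, Fin.sum_univ_two, ha, hb]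

/-- The example of §5 of Etingof–Graña: the Heisenberg Lie algebra `𝔥` with basis
`X = e 0`, `Y = e 1`, `C = e 2` (`[X,Y] = C`, `C` central), the Lie algebra `𝔱` of
upper triangular `2×2` matrices, the action `ρ(g)X = pX`, `ρ(g)Y = qX + rY`,
`ρ(g)C = (p+r)C`, and the map `π(g) = qX + rY + (p + q/2 + r)C` for
`g = [[p,q],[0,r]]`.  Then each `ρ(g)` is a derivation of `𝔥`, `ρ` is a Lie algebra
homomorphism, `π` is bijective, and `π` is a 1-cocycle. -/
theorem heisenberg_bijective_cocycle
    {H : Type*} [LieRing H] [LieAlgebra ℂ H]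
    (e : Module.Basis (Fin 3) ℂ H)
    (hXY : ⁅e 0, e 1⁆ = e 2) (hXC : ⁅e 0, e 2⁆ = 0) (hYC : ⁅e 1, e 2⁆ = 0)
    (ρ : upperTriangular2 →ₗ[ℂ] Module.End ℂ H)
    (hρX : ∀ g : upperTriangular2,
      ρ g (e 0) = ((g : Matrix (Fin 2) (Fin 2) ℂ) 0 0) • e 0)
    (hρY : ∀ g : upperTriangular2,
      ρ g (e 1) = ((g : Matrix (Fin 2) (Fin 2) ℂ) 0 1) • e 0
        + ((g : Matrix (Fin 2) (Fin 2) ℂ) 1 1) • e 1)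
    (hρC : ∀ g : upperTriangular2,
      ρ g (e 2) = ((g : Matrix (Fin 2) (Fin 2) ℂ) 0 0
        + (g : Matrix (Fin 2) (Fin 2) ℂ) 1 1) • e 2)
    (π : upperTriangular2 →ₗ[ℂ] H)
    (hπdef : ∀ g : upperTriangular2,
      π g = ((g : Matrix (Fin 2) (Fin 2) ℂ) 0 1) • e 0
        + ((g : Matrix (Fin 2) (Fin 2) ℂ) 1 1) • e 1
        + ((g : Matrix (Fin 2) (Fin 2) ℂ) 0 0
            + (g : Matrix (Fin 2) (Fin 2) ℂ) 0 1 / 2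
            + (g : Matrix (Fin 2) (Fin 2) ℂ) 1 1) • e 2) :
    (∀ (g : upperTriangular2) (u v : H),
        ρ g ⁅u, v⁆ = ⁅ρ g u, v⁆ + ⁅u, ρ g v⁆) ∧
    (∀ g h : upperTriangular2, ρ ⁅g, h⁆ = ⁅ρ g, ρ h⁆) ∧
    Function.Bijective π ∧
    (∀ g h : upperTriangular2,
        π ⁅g, h⁆ = ρ g (π h) - ρ h (π g) + ⁅π g, π h⁆) := by
  have hg0 : ∀ g : upperTriangular2, (g : Matrix (Fin 2) (Fin 2) ℂ) 1 0 = 0 := fun g => g.2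
  have h10 : ⁅e 1, e 0⁆ = -e 2 := by rw [← lie_skew, hXY]
  have h20 : ⁅e 2, e 0⁆ = 0 := by rw [← lie_skew, hXC, neg_zero]
  have h21 : ⁅e 2, e 1⁆ = 0 := by rw [← lie_skew, hYC, neg_zero]
  -- entries of the bracket in 𝔱
  have e00 : ∀ g h : upperTriangular2,
      ((⁅g, h⁆ : upperTriangular2) : Matrix (Fin 2) (Fin 2) ℂ) 0 0 = 0 := by
    intro g h
    simp only [LieSubalgebra.coe_bracket, Ring.lie_def, Matrix.sub_apply, Matrix.mul_apply,
      Fin.sum_univ_two, hg0 g, hg0 h]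
    try ring
  have e01 : ∀ g h : upperTriangular2,
      ((⁅g, h⁆ : upperTriangular2) : Matrix (Fin 2) (Fin 2) ℂ) 0 1 =
        (g : Matrix (Fin 2) (Fin 2) ℂ) 0 0 * (h : Matrix (Fin 2) (Fin 2) ℂ) 0 1
        + (g : Matrix (Fin 2) (Fin 2) ℂ) 0 1 * (h : Matrix (Fin 2) (Fin 2) ℂ) 1 1
        - ((h : Matrix (Fin 2) (Fin 2) ℂ) 0 0 * (g : Matrix (Fin 2) (Fin 2) ℂ) 0 1
          + (h : Matrix (Fin 2) (Fin 2) ℂ) 0 1 * (g : Matrix (Fin 2) (Fin 2) ℂ) 1 1) := by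
    intro g h
    simp only [LieSubalgebra.coe_bracket, Ring.lie_def, Matrix.sub_apply, Matrix.mul_apply,
      Fin.sum_univ_two, hg0 g, hg0 h]
    try ring
  have e11 : ∀ g h : upperTriangular2,
      ((⁅g, h⁆ : upperTriangular2) : Matrix (Fin 2) (Fin 2) ℂ) 1 1 = 0 := by
    intro g h
    simp only [LieSubalgebra.coe_bracket, Ring.lie_def, Matrix.sub_apply, Matrix.mul_apply,
      Fin.sum_univ_two, hg0 g, hg0 h]
    try ring
  have hder : ∀ (g : upperTriangular2) (u v : H),
      ρ g ⁅u, v⁆ = ⁅ρ g u, v⁆ + ⁅u, ρ g v⁆ := by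
    intro g u v
    have h3 : ∀ k : Fin 3, k = 0 ∨ k = 1 ∨ k = 2 := by decide
    have key : ∀ i j : Fin 3, ρ g ⁅e i, e j⁆ = ⁅ρ g (e i), e j⁆ + ⁅e i, ρ g (e j)⁆ := by
      intro i j
      rcases h3 i with rfl | rfl | rfl <;> rcases h3 j with rfl | rfl | rfl <;>
        simp only [hXY, hXC, hYC, h10, h20, h21, lie_self, hρX g, hρY g, hρC g, map_zero,
          map_add, map_smul, map_neg, lie_smul, smul_lie, lie_add, add_lie, smul_zero, zero_add,
          add_zero, smul_neg, neg_smul, smul_smul, lie_zero, zero_lie] <;>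
        module
    let B1 : H →ₗ[ℂ] H →ₗ[ℂ] H := LinearMap.mk₂ ℂ (fun u v => ρ g ⁅u, v⁆)
      (fun u u' v => by simp [add_lie]) (fun c u v => by simp [smul_lie])
      (fun u v v' => by simp [lie_add]) (fun c u v => by simp [lie_smul])
    let B2 : H →ₗ[ℂ] H →ₗ[ℂ] H := LinearMap.mk₂ ℂ (fun u v => ⁅ρ g u, v⁆ + ⁅u, ρ g v⁆)
      (fun u u' v => by simp [add_lie, lie_add, map_add]; try abel)
      (fun c u v => by simp [smul_lie, lie_smul, map_smul, smul_add])
      (fun u v v' => by simp [add_lie, lie_add, map_add]; try abel)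
      (fun c u v => by simp [smul_lie, lie_smul, map_smul, smul_add])
    have hB : B1 = B2 := e.ext fun i => e.ext fun j => by simpa [B1, B2] using key i j
    simpa [B1, B2] using LinearMap.congr_fun (LinearMap.congr_fun hB u) v
  have hhom : ∀ g h : upperTriangular2, ρ ⁅g, h⁆ = ⁅ρ g, ρ h⁆ := by
    intro g h
    have h3 : ∀ k : Fin 3, k = 0 ∨ k = 1 ∨ k = 2 := by decide
    refine e.ext fun i => ?_
    rcases h3 i with rfl | rfl | rfl <;>
      simp only [hρX, hρY, hρC, e00 g h, e01 g h, e11 g h, Ring.lie_def,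
        LinearMap.sub_apply, Module.End.mul_apply, map_add, map_smul, smul_add, smul_smul] <;>
      module
  have hmem : ∀ M : Matrix (Fin 2) (Fin 2) ℂ, M 1 0 = 0 → M ∈ upperTriangular2 :=
    fun _ h => h
  have hbij : Function.Bijective π := by
    rw [Function.bijective_iff_has_inverse]
    refine ⟨fun u => ⟨Matrix.of ![![e.repr u 2 - e.repr u 0 / 2 - e.repr u 1, e.repr u 0],
      ![0, e.repr u 1]], hmem _ (by simp)⟩, ?_, ?_⟩
    · intro g
      have ha : e.repr (π g) 0 = (g : Matrix (Fin 2) (Fin 2) ℂ) 0 1 := by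
        simp [hπdef g, Finsupp.single_apply]
      have hb : e.repr (π g) 1 = (g : Matrix (Fin 2) (Fin 2) ℂ) 1 1 := by
        simp [hπdef g, Finsupp.single_apply]
      have hc : e.repr (π g) 2 = (g : Matrix (Fin 2) (Fin 2) ℂ) 0 0
          + (g : Matrix (Fin 2) (Fin 2) ℂ) 0 1 / 2 + (g : Matrix (Fin 2) (Fin 2) ℂ) 1 1 := by
        simp [hπdef g, Finsupp.single_apply]
      have h2 : ∀ k : Fin 2, k = 0 ∨ k = 1 := by decide
      apply Subtype.ext
      ext i j
      rcases h2 i with rfl | rfl <;> rcases h2 j with rfl | rfl <;>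
        simp [ha, hb, hc, hg0 g] <;> ring
    · intro u
      rw [hπdef]
      simp only [Matrix.of_apply, Matrix.cons_val', Matrix.cons_val_zero, Matrix.cons_val_one,
        Matrix.head_cons, Matrix.empty_val', Matrix.cons_val_fin_one, Matrix.head_fin_const]
      conv_rhs => rw [← e.sum_repr u]
      rw [Fin.sum_univ_three]
      module
  refine ⟨hder, hhom, hbij, ?_⟩
  intro g h
  rw [hπdef ⁅g, h⁆, hπdef g, hπdef h, e00 g h, e01 g h, e11 g h]
  simp only [map_add, map_smul, hρX, hρY, hρC, lie_add, add_lie, lie_smul, smul_lie,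
    hXY, hXC, hYC, h10, h20, h21, lie_self, smul_zero, zero_add, add_zero, smul_neg, map_neg,
    neg_smul, smul_smul, smul_add]
  module
end
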